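/- arXiv:1705.11188 — 3 statements merged into one kernel-verified Lean document; each statement's English description precedes it below -/
import Mathlib

section
/- Let m_1,…,m_{2d} satisfy {m_i,m_j} = 2δ_{ij}I and set Q_{k,l} = m_k m_l ⊗ m_k m_l for k < l. Then the operators Q_{i,i+1} (i = 1,…,2d−1) pairwise commute, and for any 1 ≤ k < l ≤ 2d one has Q_{k,l} = Π_{i=k}^{l−1} Q_{i,i+1}. Consequently the joint +1 eigenspace of all Q_{k,l} (1 ≤ k < l ≤ 2d) equals the joint +1 eigenspace of the Q_{i,i+1} alone. -/
open Matrix Kronecker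

/-- `Q_{k,l} = m_k m_l ⊗ m_k m_l` on `H ⊗ H`. -/
noncomputable def Qop {n : ℕ} (m : ℕ → Matrix (Fin n) (Fin n) ℂ) (k l : ℕ) :
    Matrix (Fin n × Fin n) (Fin n × Fin n) ℂ :=
  (m k * m l) ⊗ₖ (m k * m l)

lemma neg_kron_neg {n : ℕ} (A B : Matrix (Fin n) (Fin n) ℂ) :
    (-A) ⊗ₖ (-B) = A ⊗ₖ B := by
  ext ⟨i, j⟩ ⟨k, l⟩
  simp [Matrix.kroneckerMap_apply]

/-- For Majorana operators `m_1,…,m_{2d}` (0-based: `m_0,…,m_{2d-1}`) with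
`{m_i,m_j} = 2δ_{ij}I`: the nearest-neighbour operators `Q_{i,i+1}` pairwise commute;
`Q_{k,l} = Π_{i=k}^{l-1} Q_{i,i+1}`; and the joint `+1` eigenspace of all the `Q_{k,l}`
equals that of the `Q_{i,i+1}` alone. -/
theorem stmt_9 (d n : ℕ) (m : ℕ → Matrix (Fin n) (Fin n) ℂ)
    (hcar : ∀ i j, i < 2 * d → j < 2 * d → m i * m j + m j * m i =
      if i = j then (2 : ℂ) • (1 : Matrix (Fin n) (Fin n) ℂ) else 0) :
    (∀ i j, i + 1 < 2 * d → j + 1 < 2 * d →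
        Qop m i (i + 1) * Qop m j (j + 1) = Qop m j (j + 1) * Qop m i (i + 1)) ∧
      (∀ k l, k < l → l < 2 * d →
        Qop m k l = (((List.range' k (l - k)).map fun i => Qop m i (i + 1))).prod) ∧
      (∀ v : Fin n × Fin n → ℂ,
        (∀ i, i + 1 < 2 * d → Qop m i (i + 1) *ᵥ v = v) ↔
          (∀ k l, k < l → l < 2 * d → Qop m k l *ᵥ v = v)) := by
  -- squares are the identity
  have hsq : ∀ i, i < 2 * d → m i * m i = 1 := by
    intro i hi
    have h := hcar i i hi hi
    rw [if_pos rfl] at h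
    have h2 : (2 : ℂ) • (m i * m i) = (2 : ℂ) • (1 : Matrix (Fin n) (Fin n) ℂ) := by
      rw [two_smul]; exact h
    exact smul_right_injective _ (by norm_num) h2
  -- anticommutation
  have hanti : ∀ i j, i < 2 * d → j < 2 * d → i ≠ j → m i * m j = -(m j * m i) := by
    intro i j hi hj hij
    have h := hcar i j hi hj
    rw [if_neg hij] at h
    exact eq_neg_of_add_eq_zero_left h
  -- a pair m a * m b commutes with m p when p is distinct from both
  have hpair : ∀ a b p, a < 2 * d → b < 2 * d → p < 2 * d → p ≠ a → p ≠ b →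
      (m a * m b) * m p = m p * (m a * m b) := by
    intro a b p ha hb hp hpa hpb
    have e1 := hanti b p hb hp (Ne.symm hpb)
    have e2 := hanti p a hp ha hpa
    calc (m a * m b) * m p = m a * (m b * m p) := by noncomm_ring
      _ = m a * -(m p * m b) := by rw [e1]
      _ = -(m a * m p) * m b := by noncomm_ring
      _ = (m p * m a) * m b := by rw [← e2]
      _ = m p * (m a * m b) := by noncomm_ring
  -- nearest-neighbour products either commute or anticommute
  have far : ∀ i j, i + 1 < 2 * d → j + 1 < 2 * d → i + 1 < j →
      (m i * m (i+1)) * (m j * m (j+1)) = (m j * m (j+1)) * (m i * m (i+1)) := by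
    intro i j hi hj hij
    have hi' : i < 2 * d := Nat.lt_of_succ_lt hi
    have hj' : j < 2 * d := Nat.lt_of_succ_lt hj
    have h1 : (m i * m (i+1)) * m j = m j * (m i * m (i+1)) :=
      hpair i (i+1) j hi' hi hj' (by omega) (by omega)
    have h2 : (m i * m (i+1)) * m (j+1) = m (j+1) * (m i * m (i+1)) :=
      hpair i (i+1) (j+1) hi' hi hj (by omega) (by omega)
    calc (m i * m (i+1)) * (m j * m (j+1))
        = ((m i * m (i+1)) * m j) * m (j+1) := by noncomm_ring
      _ = (m j * (m i * m (i+1))) * m (j+1) := by rw [h1]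
      _ = m j * ((m i * m (i+1)) * m (j+1)) := by noncomm_ring
      _ = m j * (m (j+1) * (m i * m (i+1))) := by rw [h2]
      _ = (m j * m (j+1)) * (m i * m (i+1)) := by noncomm_ring
  have adj : ∀ i, i + 2 < 2 * d →
      (m i * m (i+1)) * (m (i+1) * m (i+2)) = -((m (i+1) * m (i+2)) * (m i * m (i+1))) := by
    intro i hi
    have h0 : i < 2 * d := by omega
    have h1 : i + 1 < 2 * d := by omega
    have left : (m i * m (i+1)) * (m (i+1) * m (i+2)) = m i * m (i+2) := by
      calc (m i * m (i+1)) * (m (i+1) * m (i+2))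
          = m i * ((m (i+1) * m (i+1)) * m (i+2)) := by noncomm_ring
        _ = m i * m (i+2) := by rw [hsq (i+1) h1, one_mul]
    have right : (m (i+1) * m (i+2)) * (m i * m (i+1)) = -(m i * m (i+2)) := by
      calc (m (i+1) * m (i+2)) * (m i * m (i+1))
          = m (i+1) * ((m (i+2) * m i) * m (i+1)) := by noncomm_ring
        _ = m (i+1) * ((-(m i * m (i+2))) * m (i+1)) := by
            rw [hanti (i+2) i hi h0 (by omega)]
        _ = -((m (i+1) * m i) * ((m (i+2)) * m (i+1))) := by noncomm_ring
        _ = -((-(m i * m (i+1))) * (-(m (i+1) * m (i+2)))) := by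
            rw [hanti (i+1) i h1 h0 (by omega), hanti (i+2) (i+1) hi h1 (by omega)]
        _ = -((m i * m (i+1)) * (m (i+1) * m (i+2))) := by noncomm_ring
        _ = -(m i * m (i+2)) := by rw [left]
    rw [left, right, neg_neg]
  have hcomm : ∀ i j, i + 1 < 2 * d → j + 1 < 2 * d →
      (m i * m (i+1)) * (m j * m (j+1)) = (m j * m (j+1)) * (m i * m (i+1)) ∨
      (m i * m (i+1)) * (m j * m (j+1)) = -((m j * m (j+1)) * (m i * m (i+1))) := by
    intro i j hi hj
    rcases lt_trichotomy (i+1) j with h | h | h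
    · exact Or.inl (far i j hi hj h)
    · subst h; exact Or.inr (adj i hj)
    · rcases lt_trichotomy (j+1) i with h' | h' | h'
      · exact Or.inl (far j i hj hi h').symm
      · subst h'
        right
        show (m (j+1) * m (j+2)) * (m j * m (j+1)) = -((m j * m (j+1)) * (m (j+1) * m (j+2)))
        have hadj : (m j * m (j+1)) * (m (j+1) * m (j+2)) =
            -((m (j+1) * m (j+2)) * (m j * m (j+1))) := adj j hi
        rw [hadj, neg_neg]
      · have : i = j := by omega
        subst this
        exact Or.inl rfl
  -- Part 1
  have part1 : ∀ i j, i + 1 < 2 * d → j + 1 < 2 * d →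
      Qop m i (i + 1) * Qop m j (j + 1) = Qop m j (j + 1) * Qop m i (i + 1) := by
    intro i j hi hj
    unfold Qop
    rw [← Matrix.mul_kronecker_mul, ← Matrix.mul_kronecker_mul]
    rcases hcomm i j hi hj with h | h
    · rw [h]
    · rw [h, neg_kron_neg]
  -- telescoping product of the underlying matrices
  have prodM : ∀ j k, 1 ≤ j → k + j < 2 * d →
      ((List.range' k j).map fun i => m i * m (i+1)).prod = m k * m (k + j) := by
    intro j
    induction j with
    | zero => intro k h; omega
    | succ j ih =>
      intro k _ hkj
      rcases Nat.eq_zero_or_pos j with rfl | hj1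
      · simp
      · rw [List.range'_concat, List.map_append, List.prod_append,
          ih k hj1 (by omega)]
        simp only [Nat.one_mul, List.map_cons, List.map_nil, List.prod_cons, List.prod_nil,
          mul_one]
        calc m k * m (k + j) * (m (k + j) * m (k + j + 1))
            = m k * ((m (k + j) * m (k + j)) * m (k + j + 1)) := by noncomm_ring
          _ = m k * m (k + j + 1) := by rw [hsq (k + j) (by omega), one_mul]
          _ = m k * m (k + (j + 1)) := by rw [Nat.add_assoc]
  -- product of Qops is the Qop of the product
  have prodQ : ∀ L : List ℕ,
      ((L.map fun i => Qop m i (i+1)).prod) =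
        ((L.map fun i => m i * m (i+1)).prod) ⊗ₖ ((L.map fun i => m i * m (i+1)).prod) := by
    intro L
    induction L with
    | nil =>
      rw [List.map_nil, List.map_nil, List.prod_nil, List.prod_nil, Matrix.one_kronecker_one]
    | cons a L ih =>
      rw [List.map_cons, List.map_cons, List.prod_cons, List.prod_cons, ih,
        Matrix.mul_kronecker_mul]
      rfl
  have part2 : ∀ k l, k < l → l < 2 * d →
      Qop m k l = (((List.range' k (l - k)).map fun i => Qop m i (i + 1))).prod := by
    intro k l hkl hl
    rw [prodQ, prodM (l - k) k (by omega) (by omega)]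
    have e : k + (l - k) = l := by omega
    rw [e]
    rfl
  refine ⟨part1, part2, ?_⟩
  intro v
  constructor
  · intro h k l hkl hl
    rw [part2 k l hkl hl]
    have fix : ∀ L : List ℕ, (∀ i ∈ L, i + 1 < 2 * d) →
        ((L.map fun i => Qop m i (i+1)).prod) *ᵥ v = v := by
      intro L
      induction L with
      | nil => intro _; simp
      | cons a L ih =>
        intro hm
        rw [List.map_cons, List.prod_cons, ← Matrix.mulVec_mulVec,
          ih fun i hi => hm i (List.mem_cons_of_mem a hi)]
        exact h a (hm a List.mem_cons_self)
    refine fix _ ?_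
    intro i hi
    rw [List.mem_range'_1] at hi
    omega
  · intro h i hi
    exact h i (i + 1) (Nat.lt_succ_self i) hi
end

section
/- Let K be a connected compact Lie subgroup of U(H) for a finite-dimensional Hilbert space H, and let V ∈ U(H) be a unitary that does not normalize K (i.e., V K V† ≠ K). Let G₀ be the identity component of the closed subgroup generated by K and V. Then Lie(K) is a proper subalgebra of Lie(G₀); in particular dim Lie(K) < dim Lie(G₀). -/
open Matrix

/-- A subset of matrices closed under `1`, multiplication and `star` (within the
unitary group, `star` is the inverse). -/
def IsMatSubgroup {n : ℕ} (S : Set (Matrix (Fin n) (Fin n) ℂ)) : Prop :=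
  1 ∈ S ∧ (∀ a ∈ S, ∀ b ∈ S, a * b ∈ S) ∧ ∀ a ∈ S, star a ∈ S

/-- The Lie algebra of a set `S` of unitaries: skew-Hermitian matrices whose
one-parameter groups stay in `S`. -/
noncomputable def lieOf {n : ℕ} (S : Set (Matrix (Fin n) (Fin n) ℂ)) :
    Set (Matrix (Fin n) (Fin n) ℂ) :=
  {X | Xᴴ = -X ∧ ∀ t : ℝ, NormedSpace.exp (t • X) ∈ S}

namespace Stmt17Aux

open NormedSpace Filter Topology

attribute [local instance] Matrix.linftyOpNormedRing Matrix.linftyOpNormedAlgebra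

set_option maxHeartbeats 4000000

variable {n : ℕ}

local notation "M" => Matrix (Fin n) (Fin n) ℂ

lemma expC_eq_expR : (exp : M → M) = exp := rfl

lemma norm_one_le : ‖(1 : M)‖ ≤ 1 := by
  rw [← Matrix.diagonal_one, Matrix.linfty_opNorm_diagonal]
  exact (pi_norm_le_iff_of_nonneg zero_le_one).mpr fun i => by simp

lemma norm_pow_le_aux (x : M) : ∀ k : ℕ, ‖x ^ k‖ ≤ ‖x‖ ^ k := by
  intro k
  rcases Nat.eq_zero_or_pos k with hk | hk
  · rw [hk, pow_zero, pow_zero]; exact norm_one_le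
  · exact norm_pow_le' x hk

lemma summable_aux (x : M) : Summable fun k : ℕ => ‖x‖ ^ k / (Nat.factorial k : ℝ) :=
  Real.summable_pow_div_factorial _

lemma term_norm_le (x : M) (k : ℕ) :
    ‖(((Nat.factorial k : ℝ))⁻¹ • x ^ k : M)‖ ≤ ‖x‖ ^ k / (Nat.factorial k : ℝ) := by
  rw [norm_smul, norm_inv, Real.norm_natCast, div_eq_inv_mul]
  exact mul_le_mul_of_nonneg_left (norm_pow_le_aux x k) (by positivity)

lemma real_exp_eq (r : ℝ) : Real.exp r = ∑' k : ℕ, r ^ k / (Nat.factorial k : ℝ) := by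
  rw [Real.exp_eq_exp_ℝ, exp_eq_tsum_div]

lemma norm_exp_le (x : M) : ‖exp x‖ ≤ Real.exp ‖x‖ := by
  rw [exp_eq_tsum ℝ, real_exp_eq]
  refine le_trans (norm_tsum_le_tsum_norm ?_) (Summable.tsum_le_tsum (term_norm_le x) ?_ (summable_aux x))
  · exact (summable_aux x).of_nonneg_of_le (fun k => norm_nonneg _) (term_norm_le x)
  · exact (summable_aux x).of_nonneg_of_le (fun k => norm_nonneg _) (term_norm_le x)

lemma norm_exp_sub_one_sub_le (x : M) : ‖exp x - 1 - x‖ ≤ ‖x‖ ^ 2 * Real.exp ‖x‖ := by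
  have hs : Summable fun k : ℕ => (((Nat.factorial k : ℝ))⁻¹ • x ^ k : M) :=
    expSeries_summable' (𝕂 := ℝ) x
  have hsplit := hs.sum_add_tsum_nat_add 2
  have h0 : (∑ i ∈ Finset.range 2, (((Nat.factorial i : ℝ))⁻¹ • x ^ i : M)) = 1 + x := by
    simp [Finset.sum_range_succ]
  rw [exp_eq_tsum ℝ]
  have heq : (∑' k : ℕ, (((Nat.factorial k : ℝ))⁻¹ • x ^ k : M)) - 1 - x
      = ∑' k : ℕ, (((Nat.factorial (k + 2) : ℝ))⁻¹ • x ^ (k + 2) : M) := by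
    rw [← hsplit, h0]; abel
  rw [heq]
  have hterm : ∀ k : ℕ, ‖(((Nat.factorial (k + 2) : ℝ))⁻¹ • x ^ (k + 2) : M)‖
      ≤ ‖x‖ ^ 2 * (‖x‖ ^ k / (Nat.factorial k : ℝ)) := by
    intro k
    refine le_trans (term_norm_le x (k + 2)) ?_
    rw [pow_add, mul_comm (‖x‖ ^ k), mul_div_assoc]
    refine mul_le_mul_of_nonneg_left ?_ (by positivity)
    apply div_le_div_of_nonneg_left (by positivity) (by positivity)
    exact_mod_cast Nat.factorial_le (by omega)
  have hsum2 : Summable fun k : ℕ => ‖x‖ ^ 2 * (‖x‖ ^ k / (Nat.factorial k : ℝ)) :=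
    (summable_aux x).mul_left _
  refine le_trans (norm_tsum_le_tsum_norm ?_) ?_
  · exact hsum2.of_nonneg_of_le (fun k => norm_nonneg _) hterm
  · refine le_trans (Summable.tsum_le_tsum hterm ?_ hsum2) ?_
    · exact hsum2.of_nonneg_of_le (fun k => norm_nonneg _) hterm
    · rw [tsum_mul_left, real_exp_eq]


lemma pow_sub_pow_norm_le (A B : M) {c : ℝ} (hc : 1 ≤ c) (hA : ‖A‖ ≤ c) (hB : ‖B‖ ≤ c) :
    ∀ m : ℕ, ‖A ^ m - B ^ m‖ ≤ m * c ^ m * ‖A - B‖ := by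
  intro m
  induction m with
  | zero => simp
  | succ m ih =>
    have hc0 : (0:ℝ) ≤ c := le_trans zero_le_one hc
    have hid : A ^ (m + 1) - B ^ (m + 1) = A ^ m * (A - B) + (A ^ m - B ^ m) * B := by
      noncomm_ring
    have h1 : ‖A ^ m * (A - B)‖ ≤ c ^ m * ‖A - B‖ := by
      refine le_trans (norm_mul_le _ _) ?_
      exact mul_le_mul_of_nonneg_right
        (le_trans (norm_pow_le_aux A m) (pow_le_pow_left₀ (norm_nonneg _) hA m)) (norm_nonneg _)
    have h2 : ‖(A ^ m - B ^ m) * B‖ ≤ (m * c ^ m) * ‖A - B‖ * c := by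
      refine le_trans (norm_mul_le _ _) ?_
      exact mul_le_mul ih hB (norm_nonneg _) (by positivity)
    calc ‖A ^ (m + 1) - B ^ (m + 1)‖ ≤ c ^ m * ‖A - B‖ + (m * c ^ m) * ‖A - B‖ * c := by
          rw [hid]; exact le_trans (norm_add_le _ _) (add_le_add h1 h2)
      _ ≤ c ^ (m + 1) * ‖A - B‖ + (m * c ^ (m + 1)) * ‖A - B‖ := by
          have hcm : c ^ m ≤ c ^ (m + 1) := pow_le_pow_right₀ hc (Nat.le_succ m)
          have h3 : (m * c ^ m) * ‖A - B‖ * c = (m * c ^ (m+1)) * ‖A - B‖ := by ring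
          rw [h3]
          gcongr
      _ = (m + 1 : ℕ) * c ^ (m + 1) * ‖A - B‖ := by push_cast; ring

private lemma ring_id (a b c u v e1 e2 e3 : M) (h1 : a = 1 + u + e1) (h2 : b = 1 + v + e2)
    (h3 : c = 1 + (u + v) + e3) : a * b - c = u * v + u * e2 + e1 * b + e2 - e3 := by
  subst h1 h2 h3; noncomm_ring

lemma exp_mul_exp_sub_exp_add_norm_le (u v : M) :
    ‖exp u * exp v - exp (u + v)‖ ≤
      (‖u‖ + ‖v‖) ^ 2 *
        (1 + (‖u‖ + ‖v‖) * Real.exp (‖u‖ + ‖v‖) + Real.exp (‖u‖ + ‖v‖) * Real.exp (‖u‖ + ‖v‖)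
          + 2 * Real.exp (‖u‖ + ‖v‖)) := by
  have hu : ‖u‖ ≤ ‖u‖ + ‖v‖ := by simp [norm_nonneg]
  have hv : ‖v‖ ≤ ‖u‖ + ‖v‖ := by simp [norm_nonneg]
  have hw0 : 0 ≤ ‖u‖ + ‖v‖ := by positivity
  have hid := ring_id (exp u) (exp v) (exp (u + v)) u v
      (exp u - 1 - u) (exp v - 1 - v) (exp (u + v) - 1 - (u + v))
      (by abel) (by abel) (by abel)
  have hbE1 : ‖exp u - 1 - u‖ ≤ (‖u‖ + ‖v‖) ^ 2 * Real.exp (‖u‖ + ‖v‖) := by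
    refine le_trans (norm_exp_sub_one_sub_le u) ?_
    gcongr <;> first | positivity | assumption
  have hbE2 : ‖exp v - 1 - v‖ ≤ (‖u‖ + ‖v‖) ^ 2 * Real.exp (‖u‖ + ‖v‖) := by
    refine le_trans (norm_exp_sub_one_sub_le v) ?_
    gcongr <;> first | positivity | assumption
  have hbE3 : ‖exp (u + v) - 1 - (u + v)‖ ≤ (‖u‖ + ‖v‖) ^ 2 * Real.exp (‖u‖ + ‖v‖) := by
    refine le_trans (norm_exp_sub_one_sub_le (u + v)) ?_
    have huv : ‖u + v‖ ≤ ‖u‖ + ‖v‖ := norm_add_le u v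
    gcongr <;> first | positivity | assumption
  have hbexpv : ‖exp v‖ ≤ Real.exp (‖u‖ + ‖v‖) :=
    le_trans (norm_exp_le v) (Real.exp_le_exp.mpr hv)
  rw [hid]
  have t1 : ‖u * v‖ ≤ (‖u‖ + ‖v‖) ^ 2 := by
    refine le_trans (norm_mul_le _ _) ?_
    nlinarith [norm_nonneg u, norm_nonneg v]
  have t2 : ‖u * (exp v - 1 - v)‖ ≤ (‖u‖ + ‖v‖) * ((‖u‖ + ‖v‖) ^ 2 * Real.exp (‖u‖ + ‖v‖)) := by
    refine le_trans (norm_mul_le _ _) ?_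
    exact mul_le_mul hu hbE2 (norm_nonneg _) hw0
  have t3 : ‖(exp u - 1 - u) * exp v‖
      ≤ (‖u‖ + ‖v‖) ^ 2 * Real.exp (‖u‖ + ‖v‖) * Real.exp (‖u‖ + ‖v‖) := by
    refine le_trans (norm_mul_le _ _) ?_
    exact mul_le_mul hbE1 hbexpv (norm_nonneg _) (by positivity)
  calc ‖u * v + u * (exp v - 1 - v) + (exp u - 1 - u) * exp v + (exp v - 1 - v)
        - (exp (u + v) - 1 - (u + v))‖
      ≤ ‖u * v‖ + ‖u * (exp v - 1 - v)‖ + ‖(exp u - 1 - u) * exp v‖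
        + ‖exp v - 1 - v‖ + ‖exp (u + v) - 1 - (u + v)‖ := by
        refine le_trans (norm_sub_le _ _) ?_
        have := norm_add_le (u * v + u * (exp v - 1 - v) + (exp u - 1 - u) * exp v)
          (exp v - 1 - v)
        have h4 := norm_add_le (u * v + u * (exp v - 1 - v)) ((exp u - 1 - u) * exp v)
        have h5 := norm_add_le (u * v) (u * (exp v - 1 - v))
        linarith
    _ ≤ (‖u‖ + ‖v‖) ^ 2 + (‖u‖ + ‖v‖) * ((‖u‖ + ‖v‖) ^ 2 * Real.exp (‖u‖ + ‖v‖))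
        + (‖u‖ + ‖v‖) ^ 2 * Real.exp (‖u‖ + ‖v‖) * Real.exp (‖u‖ + ‖v‖)
        + (‖u‖ + ‖v‖) ^ 2 * Real.exp (‖u‖ + ‖v‖) + (‖u‖ + ‖v‖) ^ 2 * Real.exp (‖u‖ + ‖v‖) := by
        gcongr
    _ = (‖u‖ + ‖v‖) ^ 2 * (1 + (‖u‖ + ‖v‖) * Real.exp (‖u‖ + ‖v‖)
        + Real.exp (‖u‖ + ‖v‖) * Real.exp (‖u‖ + ‖v‖) + 2 * Real.exp (‖u‖ + ‖v‖)) := by ring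


lemma trotter (X Y : M) :
    Tendsto (fun m : ℕ => (exp ((m : ℝ)⁻¹ • X) * exp ((m : ℝ)⁻¹ • Y)) ^ m) atTop
      (𝓝 (exp (X + Y))) := by
  set s : ℝ := ‖X‖ + ‖Y‖ with hs
  have hs0 : 0 ≤ s := by positivity
  set C : ℝ := 1 + s * Real.exp s + Real.exp s * Real.exp s + 2 * Real.exp s with hC
  have hC0 : 0 ≤ C := by positivity
  set D : ℝ := Real.exp s * (s ^ 2 * C) with hD
  refine tendsto_iff_norm_sub_tendsto_zero.2 ?_
  apply squeeze_zero' (g := fun m : ℕ => D / m)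
  · exact Eventually.of_forall fun m => norm_nonneg _
  · rw [eventually_atTop]
    refine ⟨1, fun m hm => ?_⟩
    have hm0 : (0:ℝ) < m := by exact_mod_cast hm
    have hm1 : (1:ℝ) ≤ m := by exact_mod_cast hm
    have hmne : (m:ℝ) ≠ 0 := ne_of_gt hm0
    set u : M := (m : ℝ)⁻¹ • X with hu
    set v : M := (m : ℝ)⁻¹ • Y with hv
    have hnu : ‖u‖ = (m:ℝ)⁻¹ * ‖X‖ := by
      rw [hu, norm_smul, Real.norm_eq_abs, abs_of_pos (by positivity)]
    have hnv : ‖v‖ = (m:ℝ)⁻¹ * ‖Y‖ := by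
      rw [hv, norm_smul, Real.norm_eq_abs, abs_of_pos (by positivity)]
    have hw : ‖u‖ + ‖v‖ = s / m := by rw [hnu, hnv, hs]; ring
    have hwle : s / m ≤ s := div_le_self hs0 hm1
    have hw0 : 0 ≤ s / m := by positivity
    have hB : exp (u + v) ^ m = exp (X + Y) := by
      rw [← Matrix.exp_nsmul]
      congr 1
      rw [hu, hv, ← smul_add, ← Nat.cast_smul_eq_nsmul ℝ m, smul_smul, mul_inv_cancel₀ hmne,
        one_smul]
    have hA1 : ‖exp u * exp v‖ ≤ Real.exp (‖u‖ + ‖v‖) := by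
      refine le_trans (norm_mul_le _ _) ?_
      rw [Real.exp_add]
      exact mul_le_mul (norm_exp_le u) (norm_exp_le v) (norm_nonneg _) (Real.exp_pos _).le
    have hB1 : ‖exp (u + v)‖ ≤ Real.exp (‖u‖ + ‖v‖) :=
      le_trans (norm_exp_le _) (Real.exp_le_exp.mpr (norm_add_le _ _))
    have hc1 : (1:ℝ) ≤ Real.exp (‖u‖ + ‖v‖) := Real.one_le_exp (by positivity)
    have hkey := pow_sub_pow_norm_le _ _ hc1 hA1 hB1 m
    have hpow : (Real.exp (‖u‖ + ‖v‖)) ^ m = Real.exp s := by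
      rw [hw, ← Real.exp_nat_mul]
      congr 1
      field_simp
    have hdiff : ‖exp u * exp v - exp (u + v)‖ ≤ (s / m) ^ 2 * C := by
      refine le_trans (exp_mul_exp_sub_exp_add_norm_le u v) ?_
      rw [hw, hC]
      gcongr <;> first | positivity | exact hwle
    calc ‖(exp u * exp v) ^ m - exp (X + Y)‖
        = ‖(exp u * exp v) ^ m - exp (u + v) ^ m‖ := by rw [hB]
      _ ≤ m * (Real.exp (‖u‖ + ‖v‖)) ^ m * ‖exp u * exp v - exp (u + v)‖ := hkey
      _ ≤ m * (Real.exp (‖u‖ + ‖v‖)) ^ m * ((s / m) ^ 2 * C) := by gcongr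
      _ = D / m := by rw [hpow, hD]; field_simp
  · exact tendsto_const_div_atTop_nhds_zero_nat D

lemma expC (x : M) : exp x = exp x := rfl

lemma pow_mem {G : Set M} (hG : IsMatSubgroup G) {a : M} (ha : a ∈ G) : ∀ m : ℕ, a ^ m ∈ G := by
  intro m
  induction m with
  | zero => simpa using hG.1
  | succ m ih => rw [pow_succ]; exact hG.2.1 _ ih _ ha

lemma conjTranspose_real_smul (c : ℝ) (X : M) : (c • X)ᴴ = c • Xᴴ := by
  ext i j
  simp [Matrix.conjTranspose_apply, star_smul]

lemma unitary_entry_le {A : M} (hA : A ∈ Matrix.unitaryGroup (Fin n) ℂ) (i j : Fin n) :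
    ‖A i j‖ ≤ 1 := by
  have h1 : A * star A = 1 := Matrix.mem_unitaryGroup_iff.mp hA
  have h2 := congrFun (congrFun h1 i) i
  have h3 : (∑ k, A i k * star (A i k)) = 1 := by
    simpa [Matrix.mul_apply, Matrix.star_eq_conjTranspose, Matrix.conjTranspose_apply,
      Matrix.one_apply] using h2
  have h4 : (∑ k, (Complex.normSq (A i k) : ℝ)) = 1 := by
    have := congrArg Complex.re h3
    simpa [Complex.mul_conj] using this
  have h5 : Complex.normSq (A i j) ≤ 1 := by
    rw [← h4]
    exact Finset.single_le_sum (fun k _ => Complex.normSq_nonneg _) (Finset.mem_univ j)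
  have h6 : ‖A i j‖ ^ 2 = Complex.normSq (A i j) := Complex.sq_norm _
  nlinarith [norm_nonneg (A i j)]

lemma unitary_norm_le {A : M} (hA : A ∈ Matrix.unitaryGroup (Fin n) ℂ) : ‖A‖ ≤ n := by
  rw [Matrix.linfty_opNorm_def]
  have : (Finset.univ.sup fun i : Fin n => ∑ j, ‖A i j‖₊) ≤ (n : NNReal) := by
    refine Finset.sup_le fun i _ => ?_
    calc (∑ j, ‖A i j‖₊) ≤ ∑ _j : Fin n, 1 := by
          refine Finset.sum_le_sum fun j _ => ?_
          rw [← NNReal.coe_le_coe]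
          simpa using unitary_entry_le hA i j
      _ = n := by simp
  exact_mod_cast this

lemma isClosed_unitarySet : IsClosed {A : M | A ∈ Matrix.unitaryGroup (Fin n) ℂ} := by
  have h : {A : M | A ∈ Matrix.unitaryGroup (Fin n) ℂ} =
      {A : M | A * star A = 1} ∩ {A : M | star A * A = 1} := by
    ext A
    simp only [Set.mem_setOf_eq, Set.mem_inter_iff]
    constructor
    · intro hA; exact ⟨Matrix.mem_unitaryGroup_iff.mp hA, Matrix.mem_unitaryGroup_iff'.mp hA⟩
    · intro hA; exact Matrix.mem_unitaryGroup_iff.mpr hA.1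
  rw [h]
  have hc : Continuous fun A : M => star A := continuous_star
  exact ((isClosed_eq (continuous_id.mul hc) continuous_const)).inter
    (isClosed_eq (hc.mul continuous_id) continuous_const)

lemma continuous_exp_smul (X : M) : Continuous fun t : ℝ => exp (t • X) := by
  show Continuous fun t : ℝ => exp (t • X)
  exact exp_continuous.comp (continuous_id.smul continuous_const)

lemma unitarySet_subgroup : IsMatSubgroup {A : M | A ∈ Matrix.unitaryGroup (Fin n) ℂ} :=
  ⟨one_mem (Matrix.unitaryGroup (Fin n) ℂ),
   fun a ha b hb => show a * b ∈ Matrix.unitaryGroup (Fin n) ℂ from mul_mem ha hb,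
   fun a ha => show star a ∈ Matrix.unitaryGroup (Fin n) ℂ from Unitary.star_mem ha⟩

/-- The Lie algebra of a closed subgroup, as a submodule. -/
noncomputable def lieSub (G : Set M) (hGcl : IsClosed G) (hGgrp : IsMatSubgroup G) :
    Submodule ℝ M where
  carrier := lieOf G
  zero_mem' := by
    refine ⟨by simp, fun t => ?_⟩
    simpa [exp_zero] using hGgrp.1
  add_mem' := by
    rintro X Y ⟨hX1, hX2⟩ ⟨hY1, hY2⟩
    refine ⟨by rw [Matrix.conjTranspose_add, hX1, hY1]; abel, fun t => ?_⟩
    rw [expC, smul_add]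
    refine hGcl.mem_of_tendsto (trotter (t • X) (t • Y)) (Eventually.of_forall fun m => ?_)
    refine pow_mem hGgrp (hGgrp.2.1 _ ?_ _ ?_) m
    · have := hX2 ((m:ℝ)⁻¹ * t)
      rwa [expC, mul_smul] at this
    · have := hY2 ((m:ℝ)⁻¹ * t)
      rwa [expC, mul_smul] at this
  smul_mem' := by
    rintro c X ⟨hX1, hX2⟩
    refine ⟨by rw [conjTranspose_real_smul, hX1, smul_neg], fun t => ?_⟩
    rw [smul_smul]
    exact hX2 (t * c)

lemma mem_lieSub_iff {G : Set M} (hGcl : IsClosed G) (hGgrp : IsMatSubgroup G) (X : M) :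
    X ∈ lieSub G hGcl hGgrp ↔ X ∈ lieOf G := Iff.rfl

lemma lieOf_connComp {G : Set M} (hGgrp : IsMatSubgroup G) :
    lieOf G = lieOf (connectedComponentIn G 1) := by
  ext X
  constructor
  · rintro ⟨h1, h2⟩
    refine ⟨h1, fun t => ?_⟩
    have hR : (Set.range fun t : ℝ => exp (t • X)) ⊆ connectedComponentIn G 1 := by
      refine IsPreconnected.subset_connectedComponentIn ?_ ?_ ?_
      · rw [← Set.image_univ]
        exact (isPreconnected_univ (α := ℝ)).image _ (continuous_exp_smul X).continuousOn
      · exact ⟨0, by simp [exp_zero]⟩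
      · rintro x ⟨t, rfl⟩; exact h2 t
    exact hR ⟨t, rfl⟩
  · rintro ⟨h1, h2⟩
    exact ⟨h1, fun t => connectedComponentIn_subset G 1 (h2 t)⟩

lemma skew_of_unitary (Y : M) (h : ∀ t : ℝ, exp (t • Y) ∈ Matrix.unitaryGroup (Fin n) ℂ) :
    Yᴴ = -Y := by
  have hF : (fun t : ℝ => exp (t • Yᴴ) * exp (t • Y)) = fun _ : ℝ => (1 : M) := by
    funext t
    have h1 : exp (t • Yᴴ) = (exp (t • Y))ᴴ := by
      rw [← conjTranspose_real_smul, ← Matrix.exp_conjTranspose]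
    rw [h1, ← Matrix.star_eq_conjTranspose]
    exact Matrix.mem_unitaryGroup_iff'.mp (h t)
  have hd1 : HasDerivAt (fun t : ℝ => exp (t • Yᴴ)) Yᴴ 0 := by
    have := hasDerivAt_exp_smul_const (𝕂 := ℝ) Yᴴ (0 : ℝ)
    simp [exp_zero] at this; exact this
  have hd2 : HasDerivAt (fun t : ℝ => exp (t • Y)) Y 0 := by
    have := hasDerivAt_exp_smul_const (𝕂 := ℝ) Y (0 : ℝ)
    simp [exp_zero] at this; exact this
  have hd : HasDerivAt (fun t : ℝ => exp (t • Yᴴ) * exp (t • Y)) (Yᴴ + Y) 0 := by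
    have := hd1.mul hd2
    simp [exp_zero] at this; exact this
  rw [hF] at hd
  have h0 : HasDerivAt (fun _ : ℝ => (1 : M)) 0 0 := hasDerivAt_const _ _
  have := hd.unique h0
  exact eq_neg_of_add_eq_zero_left this

lemma exp_neg_eq_star {Y : M} (hu : exp Y ∈ Matrix.unitaryGroup (Fin n) ℂ) :
    exp (-Y) = star (exp Y) := by
  have h1 : star (exp Y) * exp Y = 1 := Matrix.mem_unitaryGroup_iff'.mp hu
  have h2 : exp Y * exp (-Y) = 1 := by
    rw [← Matrix.exp_add_of_commute Y (-Y) (Commute.neg_right rfl)]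
    simp [exp_zero]
  calc exp (-Y) = 1 * exp (-Y) := (one_mul _).symm
    _ = star (exp Y) * (exp Y * exp (-Y)) := by rw [← h1]; noncomm_ring
    _ = star (exp Y) := by rw [h2, mul_one]



lemma coe_lieSub {G : Set M} (hGcl : IsClosed G) (hGgrp : IsMatSubgroup G) :
    ((lieSub G hGcl hGgrp : Submodule ℝ M) : Set M) = lieOf G := rfl

lemma cartan_local {G : Set M} (hGcl : IsClosed G) (hGgrp : IsMatSubgroup G)
    (hGu : ∀ A ∈ G, A ∈ Matrix.unitaryGroup (Fin n) ℂ) :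
    ∃ ε > 0, ∀ g ∈ G, ‖g - 1‖ < ε → ∃ X ∈ lieOf G, exp X = g := by
  by_contra hcon
  push_neg at hcon
  set L : Submodule ℝ M := lieSub G hGcl hGgrp with hLdef
  obtain ⟨Cm, hCm⟩ := Submodule.exists_isCompl L
  set proj := Submodule.projectionOnto L Cm hCm with hprojdef
  set Pl : M →ₗ[ℝ] M := L.subtype.comp proj with hPl
  have hPmem : ∀ Z : M, Pl Z ∈ lieOf G := fun Z =>
    (mem_lieSub_iff hGcl hGgrp _).mp (SetLike.coe_mem (proj Z))
  have hPproj : ∀ X : M, X ∈ L → Pl X = X := by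
    intro X hX
    simp only [hPl, LinearMap.comp_apply, Submodule.subtype_apply, hprojdef]
    rw [show X = ((⟨X, hX⟩ : L) : M) from rfl, Submodule.projectionOnto_apply_left]
  have hPker : ∀ Z : M, Z - Pl Z ∈ Cm := by
    intro Z
    rw [← Submodule.projectionOnto_apply_eq_zero_iff (h := hCm)]
    have h1 : proj (Pl Z) = proj Z := by
      simp only [hPl, LinearMap.comp_apply, Submodule.subtype_apply, hprojdef]
      rw [Submodule.projectionOnto_apply_left]
    rw [map_sub, h1, sub_self]
  have hPcont : Continuous Pl := Pl.continuous_of_finiteDimensional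
  set Pc : M →L[ℝ] M := ⟨Pl, hPcont⟩ with hPc
  set φ : M → M := fun Z => exp (Pc Z) * exp (Z - Pc Z) with hφ
  -- strict derivative of φ at 0 is the identity
  have hφd : HasStrictFDerivAt φ
      ((ContinuousLinearEquiv.refl ℝ M : M ≃L[ℝ] M) : M →L[ℝ] M) 0 := by
    have hexp0 : HasStrictFDerivAt (exp : M → M) (1 : M →L[ℝ] M) 0 :=
      hasStrictFDerivAt_exp_zero
    have hPd : HasStrictFDerivAt (fun Z : M => Pc Z) Pc 0 := Pc.hasStrictFDerivAt
    have hQd : HasStrictFDerivAt (fun Z : M => Z - Pc Z)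
        (ContinuousLinearMap.id ℝ M - Pc) 0 := by
      have := (ContinuousLinearMap.id ℝ M - Pc).hasStrictFDerivAt (x := 0)
      simp at this; exact this
    have h1 : HasStrictFDerivAt (fun Z : M => exp (Pc Z)) ((1 : M →L[ℝ] M).comp Pc) 0 := by
      have := HasStrictFDerivAt.comp (0 : M) (by rw [map_zero]; exact hexp0) hPd
      exact this
    have h2 : HasStrictFDerivAt (fun Z : M => exp (Z - Pc Z))
        ((1 : M →L[ℝ] M).comp (ContinuousLinearMap.id ℝ M - Pc)) 0 := by
      have := HasStrictFDerivAt.comp (0 : M) (by rw [map_zero, sub_zero]; exact hexp0) hQd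
      exact this
    have hmul := h1.mul' h2
    have he0 : exp ((0:M)) = (1:M) := exp_zero
    refine HasStrictFDerivAt.congr_fderiv hmul ?_
    ext Z
    simp [he0, ContinuousLinearMap.one_def]
    show ((1 : M) * ((ContinuousLinearMap.id ℝ M - Pc) Z) : M) _ _ + (Pc Z * (1 : M) : M) _ _ = Z _ _
    rw [Matrix.one_mul, Matrix.mul_one]
    simp
  set ψ := hφd.toOpenPartialHomeomorph φ with hψ
  have h0src : (0:M) ∈ ψ.source := hφd.mem_toOpenPartialHomeomorph_source
  have hψcoe : ∀ x, ψ x = φ x := fun x => rfl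
  have hφ0 : φ 0 = 1 := by simp [hφ, exp_zero]
  have h1tgt : (1:M) ∈ ψ.target := by
    have := ψ.map_source h0src
    rwa [hψcoe, hφ0] at this
  have hsymm1 : ψ.symm 1 = 0 := by
    have := ψ.left_inv h0src
    rwa [hψcoe, hφ0] at this
  -- the bad sequence
  have hseq : ∀ k : ℕ, ∃ g, g ∈ G ∧ ‖g - 1‖ < 1/(k+1) ∧ ∀ X ∈ lieOf G, exp X ≠ g := by
    intro k
    obtain ⟨g, hg1, hg2, hg3⟩ := hcon (1/(k+1)) (by positivity)
    exact ⟨g, hg1, hg2, hg3⟩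
  choose g hgG hgnorm hgne using hseq
  have hgtend : Tendsto g atTop (𝓝 (1:M)) := by
    refine tendsto_iff_norm_sub_tendsto_zero.2 ?_
    refine squeeze_zero_norm (fun k => ?_) tendsto_one_div_add_atTop_nhds_zero_nat
    simpa using (hgnorm k).le
  set Z : ℕ → M := fun k => ψ.symm (g k) with hZ
  have hZtend : Tendsto Z atTop (𝓝 0) := by
    have hc : ContinuousAt ψ.symm 1 := ψ.continuousAt_symm h1tgt
    have := hc.tendsto.comp hgtend
    rwa [hsymm1] at this
  have hevtgt : ∀ᶠ k in atTop, g k ∈ ψ.target :=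
    hgtend.eventually (ψ.open_target.mem_nhds h1tgt)
  have hevφ : ∀ᶠ k in atTop, φ (Z k) = g k := by
    filter_upwards [hevtgt] with k hk
    have := ψ.right_inv hk
    rwa [hψcoe] at this
  set Y : ℕ → M := fun k => Z k - Pc (Z k) with hY
  have hYtend : Tendsto Y atTop (𝓝 0) := by
    have hcont : Continuous fun W : M => W - Pc W := continuous_id.sub Pc.continuous
    have := (hcont.tendsto 0).comp hZtend
    simp at this; exact this
  have hYC : ∀ k, Y k ∈ Cm := fun k => hPker (Z k)
  have hexpPZ : ∀ k, exp (Pc (Z k)) ∈ G := by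
    intro k
    have := (hPmem (Z k)).2 1
    rwa [expC, one_smul] at this
  have hexpPZneg : ∀ k, exp (-(Pc (Z k))) ∈ G := by
    intro k
    have := (hPmem (Z k)).2 (-1)
    rwa [expC, neg_one_smul] at this
  have hevexpY : ∀ᶠ k in atTop, exp (Y k) ∈ G := by
    filter_upwards [hevφ] with k hk
    have heq : exp (Y k) = exp (-(Pc (Z k))) * g k := by
      rw [← hk]
      have h2 : exp (-(Pc (Z k))) * exp (Pc (Z k)) = 1 := by
        rw [← Matrix.exp_add_of_commute (-(Pc (Z k))) (Pc (Z k)) (Commute.neg_left rfl)]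
        simp [exp_zero]
      calc exp (Y k) = 1 * exp (Y k) := (one_mul _).symm
        _ = exp (-(Pc (Z k))) * (exp (Pc (Z k)) * exp (Y k)) := by
            rw [← h2]; noncomm_ring
        _ = exp (-(Pc (Z k))) * φ (Z k) := rfl
    rw [heq]
    exact hGgrp.2.1 _ (hexpPZneg k) _ (hgG k)
  have hevYne : ∀ᶠ k in atTop, Y k ≠ 0 := by
    filter_upwards [hevφ] with k hk
    intro h0
    have hφk : φ (Z k) = exp (Pc (Z k)) := by
      show exp (Pc (Z k)) * exp (Z k - Pc (Z k)) = exp (Pc (Z k))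
      rw [show Z k - Pc (Z k) = Y k from rfl, h0, exp_zero, mul_one]
    exact hgne k (Pc (Z k)) (hPmem (Z k)) (by rw [← hk, hφk])
  -- extract N such that for k ≥ N everything holds
  obtain ⟨N, hN⟩ := eventually_atTop.mp (hevexpY.and hevYne)
  -- normalized sequence on the unit sphere
  set w : ℕ → M := fun k => ‖Y (k + N)‖⁻¹ • Y (k + N) with hw
  have hYne' : ∀ k : ℕ, Y (k + N) ≠ 0 := fun k => (hN (k + N) (Nat.le_add_left N k)).2
  have hexpY' : ∀ k : ℕ, exp (Y (k + N)) ∈ G := fun k => (hN (k + N) (Nat.le_add_left N k)).1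
  have hwsph : ∀ k, w k ∈ Metric.sphere (0:M) 1 := by
    intro k
    have h1 : ‖Y (k + N)‖ ≠ 0 := norm_ne_zero_iff.mpr (hYne' k)
    simp only [hw, Metric.mem_sphere, dist_zero_right, norm_smul, norm_inv, norm_norm]
    rw [inv_mul_cancel₀ h1]
  have hsphcpt : IsCompact (Metric.sphere (0:M) 1) := isCompact_sphere _ _
  haveI : FirstCountableTopology M :=
    @UniformSpace.firstCountableTopology M PseudoMetricSpace.toUniformSpace _
  obtain ⟨Yl, hYlsph, σ, hσmono, hσtend⟩ := hsphcpt.tendsto_subseq hwsph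
  have hYlnorm : ‖Yl‖ = 1 := by simpa [dist_zero_right] using hYlsph
  have hYlC : Yl ∈ Cm := by
    have hCclosed : IsClosed (Cm : Set M) := Submodule.closed_of_finiteDimensional Cm
    refine hCclosed.mem_of_tendsto hσtend (Eventually.of_forall fun k => ?_)
    exact Submodule.smul_mem Cm _ (hYC _)
  -- norms of the subsequence tend to zero
  set ν : ℕ → ℝ := fun k => ‖Y (σ k + N)‖ with hν
  have hνpos : ∀ k, 0 < ν k := fun k => norm_pos_iff.mpr (hYne' (σ k))
  have hνtend : Tendsto ν atTop (𝓝 0) := by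
    have h1 : Tendsto (fun k => σ k + N) atTop atTop :=
      tendsto_atTop_mono (fun k => Nat.le_add_right (σ k) N) hσmono.tendsto_atTop
    have h2 : Tendsto (fun k => Y (σ k + N)) atTop (𝓝 0) := hYtend.comp h1
    have h3 := (continuous_norm.tendsto (0:M)).comp h2
    simp at h3; exact h3
  -- membership of exp (t • Yl) in G for t ≥ 0, together with its inverse
  have hmain : ∀ t : ℝ, 0 ≤ t → exp (t • Yl) ∈ G ∧ exp (-(t • Yl)) ∈ G := by
    intro t ht
    set m : ℕ → ℕ := fun k => ⌊t / ν k⌋₊ with hm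
    have hmν : Tendsto (fun k => (m k : ℝ) * ν k) atTop (𝓝 t) := by
      rw [← tendsto_sub_nhds_zero_iff]
      refine squeeze_zero_norm (fun k => ?_) hνtend
      have h1 : (m k : ℝ) ≤ t / ν k := Nat.floor_le (by positivity)
      have h2 : t / ν k < m k + 1 := Nat.lt_floor_add_one _
      have h3 := hνpos k
      have h1' : (m k : ℝ) * ν k ≤ t := by
        have := mul_le_mul_of_nonneg_right h1 h3.le
        rwa [div_mul_cancel₀ t (ne_of_gt h3)] at this
      have h2' : t < ((m k : ℝ) + 1) * ν k := (div_lt_iff₀ h3).mp h2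
      rw [Real.norm_eq_abs, abs_le]
      constructor <;> nlinarith
    have hv : ∀ k, (m k : ℝ) • Y (σ k + N) = ((m k : ℝ) * ν k) • w (σ k) := by
      intro k
      have : w (σ k) = (ν k)⁻¹ • Y (σ k + N) := rfl
      rw [this, smul_smul, mul_assoc, mul_inv_cancel₀ (ne_of_gt (hνpos k)), mul_one]
    have hvt : Tendsto (fun k => (m k : ℝ) • Y (σ k + N)) atTop (𝓝 (t • Yl)) := by
      simp only [hv]
      exact hmν.smul hσtend
    have hexpmem : ∀ k, exp ((m k : ℝ) • Y (σ k + N)) ∈ G := by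
      intro k
      rw [Nat.cast_smul_eq_nsmul, Matrix.exp_nsmul]
      exact pow_mem hGgrp (hexpY' (σ k)) (m k)
    have hexpmemneg : ∀ k, exp (-((m k : ℝ) • Y (σ k + N))) ∈ G := by
      intro k
      rw [exp_neg_eq_star (hGu _ (hexpmem k))]
      exact hGgrp.2.2 _ (hexpmem k)
    constructor
    · refine hGcl.mem_of_tendsto ((exp_continuous.tendsto _).comp hvt)
        (Eventually.of_forall fun k => hexpmem k)
    · have hneg : Tendsto (fun k => -((m k : ℝ) • Y (σ k + N))) atTop (𝓝 (-(t • Yl))) :=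
        hvt.neg
      exact hGcl.mem_of_tendsto ((exp_continuous.tendsto _).comp hneg)
        (Eventually.of_forall fun k => hexpmemneg k)
  have hYlG : ∀ t : ℝ, exp (t • Yl) ∈ G := by
    intro t
    rcases le_or_gt 0 t with ht | ht
    · exact (hmain t ht).1
    · have := (hmain (-t) (by linarith)).2
      rwa [neg_smul, neg_neg] at this
  have hYlskew : Ylᴴ = -Yl := skew_of_unitary Yl fun t => hGu _ (hYlG t)
  have hYlL : Yl ∈ L := by
    rw [hLdef, mem_lieSub_iff hGcl hGgrp]
    exact ⟨hYlskew, fun t => by rw [expC]; exact hYlG t⟩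
  have hz : Yl = 0 := (Submodule.disjoint_def.mp hCm.disjoint) Yl hYlL hYlC
  rw [hz] at hYlnorm
  simp at hYlnorm


lemma connCompIn_subgroup {G : Set M} (hGgrp : IsMatSubgroup G) :
    IsMatSubgroup (connectedComponentIn G 1) := by
  have h1 : (1:M) ∈ connectedComponentIn G 1 := mem_connectedComponentIn hGgrp.1
  refine ⟨h1, ?_, ?_⟩
  · intro a ha b hb
    have haG : a ∈ G := connectedComponentIn_subset G 1 ha
    have himg : (fun y : M => a * y) '' connectedComponentIn G 1 ⊆ connectedComponentIn G a := by
      refine IsPreconnected.subset_connectedComponentIn ?_ ?_ ?_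
      · exact isPreconnected_connectedComponentIn.image _
          (continuous_const.mul continuous_id).continuousOn
      · exact ⟨1, h1, mul_one a⟩
      · rintro x ⟨y, hy, rfl⟩
        exact hGgrp.2.1 a haG y (connectedComponentIn_subset G 1 hy)
    have hcomp : connectedComponentIn G a = connectedComponentIn G 1 :=
      (connectedComponentIn_eq ha).symm
    rw [hcomp] at himg
    exact himg ⟨b, hb, rfl⟩
  · intro a ha
    have himg : (star : M → M) '' connectedComponentIn G 1 ⊆ connectedComponentIn G 1 := by
      refine IsPreconnected.subset_connectedComponentIn ?_ ?_ ?_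
      · exact isPreconnected_connectedComponentIn.image _ continuous_star.continuousOn
      · exact ⟨1, h1, star_one M⟩
      · rintro x ⟨y, hy, rfl⟩
        exact hGgrp.2.2 y (connectedComponentIn_subset G 1 hy)
    exact himg ⟨a, ha, rfl⟩

lemma connCompIn_isClosed {G : Set M} (hGcl : IsClosed G) (h1 : (1:M) ∈ G) :
    IsClosed (connectedComponentIn G 1) := by
  rw [connectedComponentIn_eq_image h1]
  exact hGcl.isClosedMap_subtype_val _ isClosed_connectedComponent


end Stmt17Aux

open Stmt17Aux NormedSpace Filter Topology

attribute [local instance] Matrix.linftyOpNormedRing Matrix.linftyOpNormedAlgebra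
set_option maxHeartbeats 4000000

/-- Extension by a non-normalizing element: if `K` is a connected compact subgroup of
`U(H)` and the unitary `V` does not normalize `K`, then, with `G` the smallest closed
subgroup of `U(H)` containing `K` and `V` and `G₀` its identity component,
`Lie(K)` is strictly contained in `Lie(G₀)`; in particular
`dim Lie(K) < dim Lie(G₀)`. -/
theorem stmt_17 (n : ℕ) (K : Set (Matrix (Fin n) (Fin n) ℂ))
    (hKsub : ∀ A ∈ K, A ∈ Matrix.unitaryGroup (Fin n) ℂ)
    (hKgrp : IsMatSubgroup K) (hKcpt : IsCompact K) (hKconn : IsConnected K)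
    (V : Matrix (Fin n) (Fin n) ℂ) (hV : V ∈ Matrix.unitaryGroup (Fin n) ℂ)
    (hnotnorm : (fun A => V * A * star V) '' K ≠ K)
    (G G0 : Set (Matrix (Fin n) (Fin n) ℂ))
    (hG : G = ⋂₀ {S | IsClosed S ∧ IsMatSubgroup S ∧
      (∀ A ∈ S, A ∈ Matrix.unitaryGroup (Fin n) ℂ) ∧ K ⊆ S ∧ V ∈ S})
    (hG0 : G0 = connectedComponentIn G 1) :
    lieOf K ⊂ lieOf G0 ∧
      Module.finrank ℝ (Submodule.span ℝ (lieOf K)) <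
        Module.finrank ℝ (Submodule.span ℝ (lieOf G0)) := by
  rcases Nat.eq_zero_or_pos n with hn0 | hn0
  · exfalso
    apply hnotnorm
    subst hn0
    haveI : Subsingleton (Matrix (Fin 0) (Fin 0) ℂ) := ⟨fun A B => by ext i j; exact i.elim0⟩
    ext A
    constructor
    · rintro ⟨B, hB, rfl⟩
      show V * B * star V ∈ K
      rwa [Subsingleton.elim (V * B * star V) B]
    · intro hA
      exact ⟨A, hA, Subsingleton.elim _ _⟩
  have hGfam : {A : Matrix (Fin n) (Fin n) ℂ | A ∈ Matrix.unitaryGroup (Fin n) ℂ} ∈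
      {S | IsClosed S ∧ IsMatSubgroup S ∧ (∀ A ∈ S, A ∈ Matrix.unitaryGroup (Fin n) ℂ) ∧
        K ⊆ S ∧ V ∈ S} :=
    ⟨isClosed_unitarySet, unitarySet_subgroup, fun _ hA => hA,
      fun A hA => hKsub A hA, hV⟩
  have hGcl : IsClosed G := by rw [hG]; exact isClosed_sInter fun S hS => hS.1
  have hGgrp : IsMatSubgroup G := by
    rw [hG]
    refine ⟨Set.mem_sInter.mpr fun S hS => hS.2.1.1, ?_, ?_⟩
    · intro a ha b hb
      exact Set.mem_sInter.mpr fun S hS =>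
        hS.2.1.2.1 a (Set.mem_sInter.mp ha S hS) b (Set.mem_sInter.mp hb S hS)
    · intro a ha
      exact Set.mem_sInter.mpr fun S hS => hS.2.1.2.2 a (Set.mem_sInter.mp ha S hS)
  have hGu : ∀ A ∈ G, A ∈ Matrix.unitaryGroup (Fin n) ℂ := by
    intro A hA
    rw [hG] at hA
    exact Set.mem_sInter.mp hA _ hGfam
  have hKG : K ⊆ G := by
    rw [hG]
    intro x hx
    exact Set.mem_sInter.mpr fun S hS => hS.2.2.2.1 hx
  have hVG : V ∈ G := by
    rw [hG]
    exact Set.mem_sInter.mpr fun S hS => hS.2.2.2.2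
  have h1K : (1 : Matrix (Fin n) (Fin n) ℂ) ∈ K := hKgrp.1
  have h1G0 : (1 : Matrix (Fin n) (Fin n) ℂ) ∈ G0 := by
    rw [hG0]; exact mem_connectedComponentIn hGgrp.1
  have hKG0 : K ⊆ G0 := by
    rw [hG0]
    exact hKconn.isPreconnected.subset_connectedComponentIn h1K hKG
  have hsub : lieOf K ⊆ lieOf G0 := fun X hX => ⟨hX.1, fun t => hKG0 (hX.2 t)⟩
  have hG0grp : IsMatSubgroup G0 := by rw [hG0]; exact connCompIn_subgroup hGgrp
  have hG0cl : IsClosed G0 := by rw [hG0]; exact connCompIn_isClosed hGcl hGgrp.1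
  have hG0sub : G0 ⊆ G := by rw [hG0]; exact connectedComponentIn_subset G 1
  have hkey : ¬ lieOf G0 ⊆ lieOf K := by
    intro hsub2
    have hGK : lieOf G ⊆ lieOf K := by
      rw [lieOf_connComp hGgrp, ← hG0]
      exact hsub2
    obtain ⟨ε, hε, hball⟩ := cartan_local hGcl hGgrp hGu
    have hKopen : IsOpen (Subtype.val ⁻¹' K : Set ↥G) := by
      refine Metric.isOpen_iff.2 ?_
      rintro ⟨x0, hx0G⟩ hx0K
      refine ⟨ε / (n + 1), by positivity, ?_⟩
      rintro ⟨x, hxG⟩ hxball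
      simp only [Set.mem_preimage] at hx0K ⊢
      rw [Metric.mem_ball, Subtype.dist_eq, dist_eq_norm] at hxball
      have hx0u := hGu x0 hx0G
      have hsx0 : star x0 ∈ G := hGgrp.2.2 x0 hx0G
      have hy : star x0 * x ∈ G := hGgrp.2.1 _ hsx0 _ hxG
      have hynorm : ‖star x0 * x - 1‖ < ε := by
        have h2 : star x0 * x - 1 = star x0 * (x - x0) := by
          rw [mul_sub, Matrix.mem_unitaryGroup_iff'.mp hx0u]
        rw [h2]
        have hn1 : (1:ℝ) ≤ n := by exact_mod_cast hn0
        calc ‖star x0 * (x - x0)‖ ≤ ‖star x0‖ * ‖x - x0‖ := norm_mul_le _ _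
          _ ≤ (n:ℝ) * ‖x - x0‖ := by
              gcongr
              exact unitary_norm_le (Unitary.star_mem hx0u)
          _ < (n:ℝ) * (ε / (n + 1)) := by
              exact mul_lt_mul_of_pos_left hxball (by positivity)
          _ ≤ ε := by
              rw [mul_div_assoc', div_le_iff₀ (by positivity)]
              nlinarith
      obtain ⟨X, hXlie, hXexp⟩ := hball _ hy hynorm
      have hXK : exp X ∈ K := by
        have := (hGK hXlie).2 1
        rwa [one_smul, expC] at this
      have hx' : x = x0 * (star x0 * x) := by
        rw [← mul_assoc, Matrix.mem_unitaryGroup_iff.mp hx0u, one_mul]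
      rw [hx']
      exact hKgrp.2.1 _ hx0K _ (hXexp ▸ hXK)
    have hKclosedG : IsClosed (Subtype.val ⁻¹' K : Set ↥G) :=
      hKcpt.isClosed.preimage continuous_subtype_val
    have hG0K : G0 ⊆ K := by
      rw [hG0, connectedComponentIn_eq_image hGgrp.1]
      rintro x ⟨y, hy, rfl⟩
      have hcc : connectedComponent (⟨1, hGgrp.1⟩ : ↥G) ⊆ (Subtype.val ⁻¹' K : Set ↥G) :=
        IsClopen.connectedComponent_subset ⟨hKclosedG, hKopen⟩ h1K
      exact hcc hy
    have hG0eqK : G0 = K := Set.Subset.antisymm hG0K hKG0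
    apply hnotnorm
    have himg : ∀ W : Matrix (Fin n) (Fin n) ℂ, W ∈ G → W ∈ Matrix.unitaryGroup (Fin n) ℂ →
        (fun A => W * A * star W) '' G0 ⊆ G0 := by
      intro W hWG hWu
      rw [hG0]
      refine IsPreconnected.subset_connectedComponentIn ?_ ?_ ?_
      · exact IsPreconnected.image isPreconnected_connectedComponentIn _
          ((continuous_const.mul continuous_id).mul continuous_const).continuousOn
      · exact ⟨1, mem_connectedComponentIn hGgrp.1,
          by simp only [mul_one]; exact Matrix.mem_unitaryGroup_iff.mp hWu⟩
      · rintro x ⟨y, hy, rfl⟩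
        exact hGgrp.2.1 _ (hGgrp.2.1 _ hWG _ (connectedComponentIn_subset G 1 hy)) _
          (hGgrp.2.2 _ hWG)
    have h1img : (fun A => V * A * star V) '' G0 ⊆ G0 := himg V hVG hV
    have h2img : (fun A => star V * A * V) '' G0 ⊆ G0 := by
      have := himg (star V) (hGgrp.2.2 _ hVG) (Unitary.star_mem hV)
      simpa [star_star] using this
    rw [← hG0eqK]
    refine Set.Subset.antisymm h1img ?_
    intro x hx
    refine ⟨star V * x * V, h2img ⟨x, hx, rfl⟩, ?_⟩
    have hVu := Matrix.mem_unitaryGroup_iff.mp hV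
    calc V * (star V * x * V) * star V = (V * star V) * x * (V * star V) := by noncomm_ring
      _ = x := by rw [hVu, one_mul, mul_one]
  obtain ⟨X0, hX0G0, hX0K⟩ := Set.not_subset.mp hkey
  constructor
  · rw [Set.ssubset_def]
    exact ⟨hsub, fun h => hX0K (h hX0G0)⟩
  · have hspanK : Submodule.span ℝ (lieOf K) = lieSub K hKcpt.isClosed hKgrp := by
      rw [← coe_lieSub hKcpt.isClosed hKgrp]
      exact Submodule.span_eq _
    have hspanG0 : Submodule.span ℝ (lieOf G0) = lieSub G0 hG0cl hG0grp := by
      rw [← coe_lieSub hG0cl hG0grp]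
      exact Submodule.span_eq _
    rw [hspanK, hspanG0]
    apply Submodule.finrank_lt_finrank_of_lt
    refine lt_of_le_of_ne ?_ ?_
    · have h := Submodule.span_mono (R := ℝ) hsub
      rwa [hspanK, hspanG0] at h
    · intro heq
      apply hX0K
      have hmem : X0 ∈ lieSub G0 hG0cl hG0grp := by
        rw [← SetLike.mem_coe, coe_lieSub]
        exact hX0G0
      rw [← heq] at hmem
      rw [← SetLike.mem_coe, coe_lieSub] at hmem
      exact hmem
end

section
/- Let m_1,…,m_{2d} be Majorana operators ({m_i,m_j} = 2δ_{ij}I) on the Fock space of d modes and define L'_FLO = 2^{−2d}·(Π_{i=1}^d (I⊗I + m_{2i−1}m_{2i}⊗m_{2i−1}m_{2i}))·(Π_{j=1}^d (I⊗I + m_{2j}m_{2j+1}⊗m_{2j}m_{2j+1})) (indices mod 2d). Then, with P^± = (I±Q)/2 where Q = (−1)^{Σ n̂_k} is the parity operator, tr((P^+⊗P^+)L'_FLO) = (1 + (−1)^d)/2; in particular the positive-parity component of L'_FLO is nonzero if and only if d is even. -/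
open Matrix Kronecker

/-- `Q_{k,l} = m_k m_l ⊗ m_k m_l`. -/
noncomputable def Qkl {d : ℕ} (m : ℕ → Matrix (Fin (2 ^ d)) (Fin (2 ^ d)) ℂ) (k l : ℕ) :
    Matrix (Fin (2 ^ d) × Fin (2 ^ d)) (Fin (2 ^ d) × Fin (2 ^ d)) ℂ :=
  (m k * m l) ⊗ₖ (m k * m l)

/-- The operator `L'_FLO` of Lemma 5 (0-based Majorana indices, second factor cyclic). -/
noncomputable def LFLO (d : ℕ) (m : ℕ → Matrix (Fin (2 ^ d)) (Fin (2 ^ d)) ℂ) :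
    Matrix (Fin (2 ^ d) × Fin (2 ^ d)) (Fin (2 ^ d) × Fin (2 ^ d)) ℂ :=
  ((2 : ℂ) ^ (2 * d))⁻¹ •
    ((List.ofFn fun i : Fin d => (1 : Matrix (Fin (2 ^ d) × Fin (2 ^ d))
        (Fin (2 ^ d) × Fin (2 ^ d)) ℂ) + Qkl m (2 * (i : ℕ)) (2 * (i : ℕ) + 1)).prod *
      (List.ofFn fun j : Fin d => (1 : Matrix (Fin (2 ^ d) × Fin (2 ^ d))
        (Fin (2 ^ d) × Fin (2 ^ d)) ℂ) +
          Qkl m (2 * (j : ℕ) + 1) ((2 * (j : ℕ) + 2) % (2 * d))).prod)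

namespace Stmt19Aux

open Finset
open scoped symmDiff

lemma sort_insert_max {s : Finset ℕ} {j : ℕ} (h : ∀ x ∈ s, x < j) :
    (insert j s).sort (· ≤ ·) = s.sort (· ≤ ·) ++ [j] := by
  have hj : j ∉ s := fun hj => lt_irrefl j (h j hj)
  apply List.Perm.eq_of_pairwise' (r := (· ≤ · : ℕ → ℕ → Prop))
  rotate_right
  · rw [← Multiset.coe_eq_coe]
    rw [Finset.sort_eq, Finset.insert_val_of_notMem hj, ← Finset.sort_eq s (· ≤ ·)]
    have : ((Finset.sort s (· ≤ ·) ++ [j] : List ℕ) : Multiset ℕ)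
        = (Finset.sort s (· ≤ ·) : List ℕ) + ([j] : List ℕ) := by
      exact_mod_cast rfl
    rw [this]
    rw [add_comm]; simp [Multiset.singleton_add]
  · exact Finset.pairwise_sort _ _
  · rw [List.pairwise_append]
    refine ⟨Finset.pairwise_sort _ _, by simp, ?_⟩
    intro a ha b hb
    simp at hb
    subst hb
    exact le_of_lt (h a (by simpa using ha))

def IsSign (ε : ℂ) : Prop := ε = 1 ∨ ε = -1
lemma IsSign.one : IsSign 1 := Or.inl rfl
lemma IsSign.mul {a b : ℂ} (ha : IsSign a) (hb : IsSign b) : IsSign (a * b) := by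
  rcases ha with h | h <;> rcases hb with h' | h' <;> simp [IsSign, h, h']
lemma IsSign.neg {a : ℂ} (ha : IsSign a) : IsSign (-a) := by
  rcases ha with h | h <;> simp [IsSign, h]
lemma IsSign.sq {a : ℂ} (ha : IsSign a) : a * a = 1 := by
  rcases ha with h | h <;> simp [h]

lemma symmDiff_singleton_not_mem {s : Finset ℕ} {j : ℕ} (h : j ∉ s) : s ∆ {j} = insert j s := by
  ext x
  by_cases hx : x = j <;> simp [Finset.mem_symmDiff, hx, h] <;> tauto

lemma symmDiff_singleton_mem {s : Finset ℕ} {j : ℕ} (h : j ∈ s) : s ∆ {j} = s.erase j := by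
  ext x
  by_cases hx : x = j <;> simp [Finset.mem_symmDiff, Finset.mem_erase, hx, h]

lemma insert_symmDiff_singleton {s : Finset ℕ} {j k : ℕ} (hk : k ∈ s) (hjk : j ≠ k) :
    insert k ((s.erase k) ∆ {j}) = s ∆ {j} := by
  ext x
  by_cases hxk : x = k <;> by_cases hxj : x = j <;>
    simp [Finset.mem_symmDiff, Finset.mem_erase, hxk, hxj, hk, hjk, Ne.symm hjk] <;> tauto

variable {d : ℕ} {m : ℕ → Matrix (Fin (2 ^ d)) (Fin (2 ^ d)) ℂ}

noncomputable def e (m : ℕ → Matrix (Fin (2 ^ d)) (Fin (2 ^ d)) ℂ) (s : Finset ℕ) :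
    Matrix (Fin (2 ^ d)) (Fin (2 ^ d)) ℂ :=
  ((s.sort (· ≤ ·)).map m).prod

@[simp] lemma e_empty : e m ∅ = 1 := by simp [e]
@[simp] lemma e_singleton (j : ℕ) : e m {j} = m j := by simp [e]

lemma e_insert_max {s : Finset ℕ} {j : ℕ} (h : ∀ x ∈ s, x < j) :
    e m (insert j s) = e m s * m j := by
  rw [e, sort_insert_max h, List.map_append, List.prod_append, e]
  simp

lemma e_insert_min {s : Finset ℕ} {j : ℕ} (h : ∀ x ∈ s, j < x) :
    e m (insert j s) = m j * e m s := by
  have hj : j ∉ s := fun hj => lt_irrefl j (h j hj)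
  rw [e, Finset.sort_insert _ (fun b hb => le_of_lt (h b (by simpa using hb))) hj]
  simp [e]

section
variable (hcar : ∀ i j, i < 2 * d → j < 2 * d → m i * m j + m j * m i =
    if i = j then (2 : ℂ) • (1 : Matrix (Fin (2 ^ d)) (Fin (2 ^ d)) ℂ) else 0)
include hcar

lemma msq {j : ℕ} (hj : j < 2 * d) : m j * m j = 1 := by
  have := hcar j j hj hj
  simp only [if_pos rfl] at this
  rw [← two_smul ℂ (m j * m j)] at this
  exact smul_right_injective _ (two_ne_zero) this

lemma manti {i j : ℕ} (hi : i < 2 * d) (hj : j < 2 * d) (hij : i ≠ j) :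
    m i * m j = -(m j * m i) := by
  have := hcar i j hi hj
  rw [if_neg hij] at this
  linear_combination (norm := abel) this

lemma e_mul_single : ∀ s : Finset ℕ, s ⊆ Finset.range (2 * d) → ∀ j, j < 2 * d →
    ∃ ε, IsSign ε ∧ e m s * m j = ε • e m (s ∆ {j}) := by
  intro s
  induction s using Finset.strongInduction with
  | _ s ih =>
    intro hs j hj
    rcases s.eq_empty_or_nonempty with rfl | hne
    · exact ⟨1, .one, by simp [bot_eq_empty ▸ (bot_symmDiff ({j} : Finset ℕ))]⟩
    · set k := s.max' hne with hk
      have hks : k ∈ s := s.max'_mem hne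
      have hmax : ∀ x ∈ s.erase k, x < k := fun x hx =>
        lt_of_le_of_ne (s.le_max' x (Finset.mem_of_mem_erase hx)) (Finset.ne_of_mem_erase hx)
      have hes : e m s = e m (s.erase k) * m k := by
        conv_lhs => rw [← Finset.insert_erase hks]
        exact e_insert_max hmax
      have hkd : k < 2 * d := by simpa [Finset.mem_range] using hs hks
      by_cases hjk : j = k
      · subst hjk
        refine ⟨1, .one, ?_⟩
        rw [hes, mul_assoc, msq hcar hj, mul_one, one_smul, symmDiff_singleton_mem hks]
      · by_cases hlt : k < j
        · have hjs : j ∉ s := fun h => absurd (s.le_max' j h) (by omega)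
          refine ⟨1, .one, ?_⟩
          rw [one_smul, symmDiff_singleton_not_mem hjs,
            e_insert_max (fun x hx => lt_of_le_of_lt (s.le_max' x hx) hlt)]
        · have hjk' : j < k := by omega
          obtain ⟨ε, hε, hrec⟩ := ih (s.erase k) (Finset.erase_ssubset hks)
            (fun x hx => hs (Finset.mem_of_mem_erase hx)) j hj
          refine ⟨-ε, hε.neg, ?_⟩
          rw [hes, mul_assoc, manti hcar hkd hj (by omega), mul_neg, ← mul_assoc, hrec,
            smul_mul_assoc, ← e_insert_max (s := (s.erase k) ∆ {j}) ?bnd,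
            insert_symmDiff_singleton hks hjk, neg_smul]
          intro x hx
          rw [Finset.mem_symmDiff] at hx
          rcases hx with ⟨hx, -⟩ | ⟨hx, -⟩
          · exact hmax x hx
          · simpa using Finset.mem_singleton.mp hx ▸ hjk'

lemma e_mul : ∀ t s : Finset ℕ, t ⊆ Finset.range (2 * d) → s ⊆ Finset.range (2 * d) →
    ∃ ε, IsSign ε ∧ e m s * e m t = ε • e m (s ∆ t) := by
  intro t
  induction t using Finset.strongInduction with
  | _ t ih =>
    intro s ht hs
    rcases t.eq_empty_or_nonempty with rfl | hne
    · exact ⟨1, .one, by simp [bot_eq_empty ▸ (symmDiff_bot s)]⟩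
    · set k := t.min' hne with hk
      have hkt : k ∈ t := t.min'_mem hne
      have hkd : k < 2 * d := by simpa [Finset.mem_range] using ht hkt
      have hmin : ∀ x ∈ t.erase k, k < x := fun x hx =>
        lt_of_le_of_ne (t.min'_le x (Finset.mem_of_mem_erase hx)) (Ne.symm (Finset.ne_of_mem_erase hx))
      have het : e m t = m k * e m (t.erase k) := by
        conv_lhs => rw [← Finset.insert_erase hkt]
        exact e_insert_min hmin
      obtain ⟨ε₁, h1, e1⟩ := e_mul_single hcar s hs k hkd
      have hsd : s ∆ {k} ⊆ Finset.range (2 * d) := by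
        intro x hx
        rw [Finset.mem_symmDiff] at hx
        rcases hx with ⟨hx, -⟩ | ⟨hx, -⟩
        · exact hs hx
        · simpa [Finset.mem_range] using Finset.mem_singleton.mp hx ▸ hkd
      obtain ⟨ε₂, h2, e2⟩ := ih (t.erase k) (Finset.erase_ssubset hkt)
        (s ∆ {k}) (fun x hx => ht (Finset.mem_of_mem_erase hx)) hsd
      refine ⟨ε₁ * ε₂, h1.mul h2, ?_⟩
      have hset : s ∆ {k} ∆ t.erase k = s ∆ t := by
        rw [symmDiff_assoc]
        congr 1
        rw [symmDiff_comm, symmDiff_singleton_not_mem (Finset.notMem_erase k t),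
          Finset.insert_erase hkt]
      rw [het, ← mul_assoc, e1, smul_mul_assoc, e2, smul_smul, hset]

end
lemma sort_attachFin {s : Finset ℕ} (hb : ∀ x ∈ s, x < 2 * d) :
    ((s.attachFin hb).sort (· ≤ ·)).map (Fin.val) = s.sort (· ≤ ·) := by
  rw [← Finset.sort_val, ← Finset.sort_val]
  rw [Multiset.map_sort (r := (· ≤ · : Fin (2*d) → Fin (2*d) → Prop))
      (r' := (· ≤ · : ℕ → ℕ → Prop)) Fin.val _ (by intros; rfl)]
  congr 1
  show Multiset.map Fin.val (Multiset.pmap _ s.1 hb) = s.1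
  rw [Multiset.map_pmap]
  rw [show (fun (a : ℕ) (h : a < 2*d) => Fin.val ⟨a, h⟩) = (fun (a : ℕ) (_ : a < 2*d) => id a) from rfl,
    Multiset.pmap_eq_map, Multiset.map_id]

lemma trace_e_zero
    (htr : ∀ s : Finset (Fin (2 * d)), s.Nonempty →
      Matrix.trace ((s.sort (· ≤ ·)).map fun i => m (i : ℕ)).prod = 0)
    {s : Finset ℕ} (hs : s ⊆ Finset.range (2 * d)) (hne : s.Nonempty) :
    Matrix.trace (e m s) = 0 := by
  have hb : ∀ x ∈ s, x < 2 * d := fun x hx => Finset.mem_range.mp (hs hx)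
  have hne' : (s.attachFin hb).Nonempty := by
    rw [← Finset.card_pos, Finset.card_attachFin, Finset.card_pos]; exact hne
  have hco : ∀ (l : List (Fin (2 * d))), (l >>= fun a => pure (Fin.val a) : List ℕ) = l.map Fin.val :=
    fun l => List.flatMap_pure_eq_map Fin.val l
  have := htr (s.attachFin hb) hne'
  rw [hco] at this
  rw [List.map_map] at this
  rw [e, ← sort_attachFin hb, List.map_map]
  exact this

lemma prod_one_add {R : Type*} [Ring R] (g : ℕ → R) :
    ∀ n : ℕ, ((List.range n).map fun i => 1 + g i).prod =
      ∑ A ∈ (Finset.range n).powerset, ((A.sort (· ≤ ·)).map g).prod := by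
  intro n
  induction n with
  | zero => simp
  | succ n ih =>
    have hdisj : Disjoint (Finset.range n).powerset
        (((Finset.range n).powerset).image (insert n)) := by
      rw [Finset.disjoint_left]
      intro t ht hti
      obtain ⟨A, hA, rfl⟩ := Finset.mem_image.mp hti
      have := Finset.mem_powerset.mp ht (Finset.mem_insert_self n A)
      simp at this
    rw [List.range_succ, List.map_append, List.prod_append, List.map_cons, List.map_nil,
      List.prod_cons, List.prod_nil, mul_one, mul_add, mul_one, ih,
      Finset.range_add_one, Finset.powerset_insert, Finset.sum_union hdisj,
      Finset.sum_image ?hinj]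
    case hinj =>
      intro A hA B hB hAB
      have hnA : n ∉ A := fun h => by simpa using Finset.mem_powerset.mp hA h
      have hnB : n ∉ B := fun h => by simpa using Finset.mem_powerset.mp hB h
      rw [← Finset.erase_insert hnA, hAB, Finset.erase_insert hnB]
    congr 1
    rw [Finset.sum_mul]
    apply Finset.sum_congr rfl
    intro A hA
    have hbnd : ∀ x ∈ A, x < n := fun x hx => by
      simpa using Finset.mem_powerset.mp hA hx
    rw [sort_insert_max hbnd, List.map_append, List.prod_append]
    simp

lemma prod_kron {N : ℕ} (l : List (Matrix (Fin N) (Fin N) ℂ)) :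
    (l.map fun x => x ⊗ₖ x).prod = l.prod ⊗ₖ l.prod := by
  induction l with
  | nil => simp [Matrix.one_kronecker_one]
  | cons a l ih => simp [ih, Matrix.mul_kronecker_mul]

def XA (A : Finset ℕ) : Finset ℕ := A.biUnion fun i => {2 * i, 2 * i + 1}
def YB (d : ℕ) (B : Finset ℕ) : Finset ℕ := B.biUnion fun j => {2 * j + 1, (2 * j + 2) % (2 * d)}

lemma XA_subset {d : ℕ} {A : Finset ℕ} (hA : A ⊆ Finset.range d) :
    XA A ⊆ Finset.range (2 * d) := by
  intro x hx
  simp only [XA, Finset.mem_biUnion, Finset.mem_insert, Finset.mem_singleton] at hx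
  obtain ⟨i, hi, hx⟩ := hx
  have : i < d := Finset.mem_range.mp (hA hi)
  simp only [Finset.mem_range]; omega

lemma YB_subset {d : ℕ} (hd : 1 ≤ d) {B : Finset ℕ} (hB : B ⊆ Finset.range d) :
    YB d B ⊆ Finset.range (2 * d) := by
  intro x hx
  simp only [YB, Finset.mem_biUnion, Finset.mem_insert, Finset.mem_singleton] at hx
  obtain ⟨j, hj, hx⟩ := hx
  have hjd : j < d := Finset.mem_range.mp (hB hj)
  have hmod : (2 * j + 2) % (2 * d) < 2 * d := Nat.mod_lt _ (by omega)
  simp only [Finset.mem_range]; omega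

lemma mem_XA {d : ℕ} {A : Finset ℕ} (hA : A ⊆ Finset.range d) {x : ℕ} :
    x ∈ XA A ↔ x < 2 * d ∧ x / 2 ∈ A := by
  simp only [XA, Finset.mem_biUnion, Finset.mem_insert, Finset.mem_singleton]
  constructor
  · rintro ⟨i, hi, hx⟩
    have : i < d := Finset.mem_range.mp (hA hi)
    constructor
    · omega
    · have : x / 2 = i := by omega
      rwa [this]
  · rintro ⟨hx, hx2⟩
    exact ⟨x / 2, hx2, by omega⟩

lemma mem_YB_odd {d : ℕ} {B : Finset ℕ} (hB : B ⊆ Finset.range d) {x : ℕ}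
    (hx : x % 2 = 1) : x ∈ YB d B ↔ x < 2 * d ∧ x / 2 ∈ B := by
  simp only [YB, Finset.mem_biUnion, Finset.mem_insert, Finset.mem_singleton]
  constructor
  · rintro ⟨j, hj, h | h⟩
    · have : j < d := Finset.mem_range.mp (hB hj)
      refine ⟨by omega, ?_⟩
      have : x / 2 = j := by omega
      rwa [this]
    · exfalso
      have h2 : (2 * j + 2) % (2 * d) % 2 = 0 := by
        rcases Nat.eq_zero_or_pos d with rfl | hd
        · simp at h; omega
        · have : (2 * j + 2) % (2 * d) % 2 = (2 * j + 2) % 2 := Nat.mod_mod_of_dvd _ ⟨d, rfl⟩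
          omega
      omega
  · rintro ⟨hxd, hx2⟩
    exact ⟨x / 2, hx2, Or.inl (by omega)⟩

lemma mem_YB_even {d : ℕ} (hd : 1 ≤ d) {B : Finset ℕ} (hB : B ⊆ Finset.range d) {x : ℕ}
    (hx : x % 2 = 0) (hxd : x < 2 * d) :
    x ∈ YB d B ↔ (if x = 0 then d - 1 else x / 2 - 1) ∈ B := by
  simp only [YB, Finset.mem_biUnion, Finset.mem_insert, Finset.mem_singleton]
  constructor
  · rintro ⟨j, hj, h | h⟩
    · omega
    · have hjd : j < d := Finset.mem_range.mp (hB hj)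
      rcases Nat.lt_or_ge (j + 1) d with hlt | hge
      · have : (2 * j + 2) % (2 * d) = 2 * j + 2 := Nat.mod_eq_of_lt (by omega)
        rw [this] at h
        have hx0 : x ≠ 0 := by omega
        rw [if_neg hx0]
        have : x / 2 - 1 = j := by omega
        rwa [this]
      · have hj1 : j = d - 1 := by omega
        have : 2 * j + 2 = 2 * d := by omega
        rw [this, Nat.mod_self] at h
        rw [h, if_pos rfl, ← hj1]
        exact hj
  · intro hmem
    by_cases hx0 : x = 0
    · refine ⟨d - 1, by rwa [if_pos hx0] at hmem, Or.inr ?_⟩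
      have : 2 * (d - 1) + 2 = 2 * d := by omega
      rw [this, Nat.mod_self, hx0]
    · refine ⟨x / 2 - 1, by rwa [if_neg hx0] at hmem, Or.inr ?_⟩
      have h2 : 2 * (x / 2 - 1) + 2 = x := by omega
      rw [h2, Nat.mod_eq_of_lt hxd]

lemma shift_closed {dd : ℕ} {A : Finset ℕ} (hd : 1 ≤ dd) (hA : A ⊆ Finset.range dd)
    (hs : ∀ i, i < dd → ((i ∈ A) ↔ ((if i = dd - 1 then 0 else i + 1) ∈ A))) :
    A = ∅ ∨ A = Finset.range dd := by
  rcases A.eq_empty_or_nonempty with rfl | ⟨a, ha⟩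
  · exact Or.inl rfl
  · right
    have had : a < dd := by simpa using hA ha
    have up : ∀ a₀, a₀ ∈ A → ∀ j, a₀ ≤ j → j < dd → j ∈ A := by
      intro a₀ h₀ j
      induction j with
      | zero => intro h1 _; have : a₀ = 0 := by omega
                exact this ▸ h₀
      | succ j ih =>
        intro h1 h2
        rcases Nat.eq_or_lt_of_le h1 with heq | hlt
        · exact heq ▸ h₀
        · have hj : j ∈ A := ih (by omega) (by omega)
          have := (hs j (by omega)).mp hj
          rwa [if_neg (by omega)] at this
    have hd1 : dd - 1 ∈ A := up a ha (dd - 1) (by omega) (by omega)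
    have h0 : 0 ∈ A := by
      have := (hs (dd - 1) (by omega)).mp hd1
      rwa [if_pos rfl] at this
    ext i
    simp only [Finset.mem_range]
    exact ⟨fun h => by simpa using hA h, fun h => up 0 h0 i (Nat.zero_le _) h⟩

lemma classify_eq {d : ℕ} {A B : Finset ℕ} (hd : 1 ≤ d) (hA : A ⊆ Finset.range d)
    (hB : B ⊆ Finset.range d) (h : XA A = YB d B) :
    (A = ∅ ∧ B = ∅) ∨ (A = Finset.range d ∧ B = Finset.range d) := by
  have hAB : A = B := by
    ext i
    by_cases hi : i < d
    · have h1 : (2 * i + 1) ∈ XA A ↔ i ∈ A := by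
        rw [mem_XA hA]
        constructor
        · rintro ⟨-, h⟩; rwa [show (2 * i + 1) / 2 = i by omega] at h
        · intro h; exact ⟨by omega, by rwa [show (2 * i + 1) / 2 = i by omega]⟩
      have h2 : (2 * i + 1) ∈ YB d B ↔ i ∈ B := by
        rw [mem_YB_odd hB (by omega)]
        constructor
        · rintro ⟨-, h⟩; rwa [show (2 * i + 1) / 2 = i by omega] at h
        · intro h; exact ⟨by omega, by rwa [show (2 * i + 1) / 2 = i by omega]⟩
      rw [← h1, h, h2]
    · constructor
      · intro hmem; exact absurd (by simpa using hA hmem) hi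
      · intro hmem; exact absurd (by simpa using hB hmem) hi
  have hshift : ∀ i, i < d → ((i ∈ A) ↔ ((if i = d - 1 then 0 else i + 1) ∈ A)) := by
    intro i hi
    set x := 2 * (if i = d - 1 then 0 else i + 1) with hxdef
    have hxe : x % 2 = 0 := by omega
    have hxd : x < 2 * d := by
      by_cases h' : i = d - 1 <;> simp [hxdef, h'] <;> omega
    have h1 : x ∈ XA A ↔ (if i = d - 1 then 0 else i + 1) ∈ A := by
      rw [mem_XA hA]
      constructor
      · rintro ⟨-, h⟩; rwa [show x / 2 = (if i = d - 1 then 0 else i + 1) by omega] at h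
      · intro h; exact ⟨hxd, by rwa [show x / 2 = (if i = d - 1 then 0 else i + 1) by omega]⟩
    have h2 : x ∈ YB d B ↔ i ∈ B := by
      rw [mem_YB_even hd hB hxe hxd]
      by_cases h' : i = d - 1
      · rw [show x = 0 by simp [hxdef, h']]
        simp [h']
      · have hx0 : x ≠ 0 := by simp [hxdef, h']
        rw [if_neg hx0, show x / 2 - 1 = i by rw [hxdef, if_neg h']; omega]
    rw [← h1, h, h2, hAB]
  rcases shift_closed hd hA hshift with rfl | rfl
  · exact Or.inl ⟨rfl, hAB.symm⟩
  · exact Or.inr ⟨rfl, hAB.symm⟩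

lemma classify_compl {d : ℕ} {A B : Finset ℕ} (hd : 1 ≤ d) (hA : A ⊆ Finset.range d)
    (hB : B ⊆ Finset.range d) (h : ∀ x, x < 2 * d → (x ∈ XA A ↔ x ∉ YB d B)) :
    (A = ∅ ∧ B = Finset.range d) ∨ (A = Finset.range d ∧ B = ∅) := by
  have hodd : ∀ i, i < d → (i ∈ A ↔ i ∉ B) := by
    intro i hi
    have h1 : (2 * i + 1) ∈ XA A ↔ i ∈ A := by
      rw [mem_XA hA]
      constructor
      · rintro ⟨-, hh⟩; rwa [show (2 * i + 1) / 2 = i by omega] at hh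
      · intro hh; exact ⟨by omega, by rwa [show (2 * i + 1) / 2 = i by omega]⟩
    have h2 : (2 * i + 1) ∈ YB d B ↔ i ∈ B := by
      rw [mem_YB_odd hB (by omega)]
      constructor
      · rintro ⟨-, hh⟩; rwa [show (2 * i + 1) / 2 = i by omega] at hh
      · intro hh; exact ⟨by omega, by rwa [show (2 * i + 1) / 2 = i by omega]⟩
    rw [← h1, ← h2]
    exact h _ (by omega)
  have hshift : ∀ i, i < d → ((i ∈ A) ↔ ((if i = d - 1 then 0 else i + 1) ∈ A)) := by
    intro i hi
    set x := 2 * (if i = d - 1 then 0 else i + 1) with hxdef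
    have hxe : x % 2 = 0 := by omega
    have hxd : x < 2 * d := by
      by_cases h' : i = d - 1 <;> simp [hxdef, h'] <;> omega
    have h1 : x ∈ XA A ↔ (if i = d - 1 then 0 else i + 1) ∈ A := by
      rw [mem_XA hA]
      constructor
      · rintro ⟨-, hh⟩; rwa [show x / 2 = (if i = d - 1 then 0 else i + 1) by omega] at hh
      · intro hh; exact ⟨hxd, by rwa [show x / 2 = (if i = d - 1 then 0 else i + 1) by omega]⟩
    have h2 : x ∈ YB d B ↔ i ∈ B := by
      rw [mem_YB_even hd hB hxe hxd]
      by_cases h' : i = d - 1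
      · rw [show x = 0 by simp [hxdef, h']]
        simp [h']
      · have hx0 : x ≠ 0 := by simp [hxdef, h']
        rw [if_neg hx0, show x / 2 - 1 = i by rw [hxdef, if_neg h']; omega]
    rw [← h1, h x hxd, h2]
    exact hodd i hi
  have hBc : ∀ i, i < d → (i ∈ B ↔ i ∉ A) := by
    intro i hi
    have := hodd i hi
    tauto
  rcases shift_closed hd hA hshift with rfl | rfl
  · left
    refine ⟨rfl, ?_⟩
    ext i
    simp only [Finset.mem_range]
    constructor
    · intro hh; simpa using hB hh
    · intro hh; exact (hBc i hh).mpr (by simp)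
  · right
    refine ⟨rfl, ?_⟩
    ext i
    constructor
    · intro hh
      have hid : i < d := by simpa using hB hh
      exact absurd (Finset.mem_range.mpr hid) ((hBc i hid).mp hh)
    · intro hh; simp at hh
  
lemma XA_empty : XA ∅ = ∅ := by simp [XA]
lemma YB_empty (d : ℕ) : YB d ∅ = ∅ := by simp [YB]

lemma XA_full {d : ℕ} : XA (Finset.range d) = Finset.range (2 * d) := by
  ext x
  rw [mem_XA (Finset.Subset.refl _), Finset.mem_range, Finset.mem_range]
  omega

lemma YB_full {d : ℕ} (hd : 1 ≤ d) : YB d (Finset.range d) = Finset.range (2 * d) := by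
  ext x
  constructor
  · intro hx; exact YB_subset hd (Finset.Subset.refl _) hx
  · intro hx
    rw [Finset.mem_range] at hx
    by_cases he : x % 2 = 0
    · rw [mem_YB_even hd (Finset.Subset.refl _) he hx]
      by_cases h' : x = 0 <;> simp [h'] <;> omega
    · rw [mem_YB_odd (Finset.Subset.refl _) (by omega)]
      exact ⟨hx, by rw [Finset.mem_range]; omega⟩


section Main

variable {d : ℕ} {m : ℕ → Matrix (Fin (2 ^ d)) (Fin (2 ^ d)) ℂ}

noncomputable def la (m : ℕ → Matrix (Fin (2 ^ d)) (Fin (2 ^ d)) ℂ) (A : Finset ℕ) :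
    Matrix (Fin (2 ^ d)) (Fin (2 ^ d)) ℂ :=
  ((A.sort (· ≤ ·)).map fun i => m (2 * i) * m (2 * i + 1)).prod

noncomputable def lb (m : ℕ → Matrix (Fin (2 ^ d)) (Fin (2 ^ d)) ℂ) (B : Finset ℕ) :
    Matrix (Fin (2 ^ d)) (Fin (2 ^ d)) ℂ :=
  ((B.sort (· ≤ ·)).map fun j => m (2 * j + 1) * m ((2 * j + 2) % (2 * d))).prod

lemma prod_sort_peel {M : Type*} [Monoid M] (f : ℕ → M) {A : Finset ℕ} {k : ℕ}
    (hk : k ∈ A) (hmax : ∀ x ∈ A.erase k, x < k) :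
    ((A.sort (· ≤ ·)).map f).prod = (((A.erase k).sort (· ≤ ·)).map f).prod * f k := by
  conv_lhs => rw [← Finset.insert_erase hk]
  rw [sort_insert_max hmax, List.map_append, List.prod_append]
  simp

lemma la_eq : ∀ A : Finset ℕ, la m A = e m (XA A) := by
  intro A
  induction A using Finset.strongInduction with
  | _ A ih =>
    rcases A.eq_empty_or_nonempty with rfl | hne
    · simp [la, XA_empty]
    · set k := A.max' hne with hk
      have hkA : k ∈ A := A.max'_mem hne
      have hmax : ∀ x ∈ A.erase k, x < k := fun x hx =>
        lt_of_le_of_ne (A.le_max' x (Finset.mem_of_mem_erase hx)) (Finset.ne_of_mem_erase hx)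
      have hbnd : ∀ x ∈ XA (A.erase k), x < 2 * k := by
        intro x hx
        simp only [XA, Finset.mem_biUnion, Finset.mem_insert, Finset.mem_singleton] at hx
        obtain ⟨i, hi, hx⟩ := hx
        have := hmax i hi
        omega
      have hbnd2 : ∀ x ∈ insert (2 * k) (XA (A.erase k)), x < 2 * k + 1 := by
        intro x hx
        rcases Finset.mem_insert.mp hx with rfl | hx
        · omega
        · have := hbnd x hx; omega
      have hset : insert (2 * k + 1) (insert (2 * k) (XA (A.erase k))) = XA A := by
        ext x
        simp only [Finset.mem_insert, XA, Finset.mem_biUnion, Finset.mem_singleton]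
        constructor
        · rintro (rfl | rfl | ⟨i, hi, hx⟩)
          · exact ⟨k, hkA, Or.inr rfl⟩
          · exact ⟨k, hkA, Or.inl rfl⟩
          · exact ⟨i, Finset.mem_of_mem_erase hi, hx⟩
        · rintro ⟨i, hi, hx⟩
          by_cases hik : i = k
          · subst hik; tauto
          · exact Or.inr (Or.inr ⟨i, Finset.mem_erase.mpr ⟨hik, hi⟩, hx⟩)
      rw [la, prod_sort_peel _ hkA hmax, ← la, ih (A.erase k) (Finset.erase_ssubset hkA),
        ← mul_assoc, ← e_insert_max hbnd, ← e_insert_max hbnd2, hset]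

section WithCar
variable (hcar : ∀ i j, i < 2 * d → j < 2 * d → m i * m j + m j * m i =
    if i = j then (2 : ℂ) • (1 : Matrix (Fin (2 ^ d)) (Fin (2 ^ d)) ℂ) else 0)
  (hd : 1 ≤ d)
include hcar hd

lemma lb_eq : ∀ B : Finset ℕ, B ⊆ Finset.range d →
    ∃ ε, IsSign ε ∧ lb m B = ε • e m (YB d B) := by
  intro B
  induction B using Finset.strongInduction with
  | _ B ih =>
    intro hB
    rcases B.eq_empty_or_nonempty with rfl | hne
    · exact ⟨1, .one, by simp [lb, YB_empty]⟩
    · set k := B.max' hne with hk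
      have hkB : k ∈ B := B.max'_mem hne
      have hkd : k < d := by simpa using hB hkB
      have hmax : ∀ x ∈ B.erase k, x < k := fun x hx =>
        lt_of_le_of_ne (B.le_max' x (Finset.mem_of_mem_erase hx)) (Finset.ne_of_mem_erase hx)
      obtain ⟨ε₁, hs1, h1⟩ := ih (B.erase k) (Finset.erase_ssubset hkB)
        (fun x hx => hB (Finset.mem_of_mem_erase hx))
      -- the pair factor
      have hpair : ∃ εp, IsSign εp ∧
          m (2 * k + 1) * m ((2 * k + 2) % (2 * d)) =
            εp • e m {2 * k + 1, (2 * k + 2) % (2 * d)} := by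
        rcases Nat.lt_or_ge (k + 1) d with hlt | hge
        · refine ⟨1, .one, ?_⟩
          rw [Nat.mod_eq_of_lt (by omega), one_smul]
          have : ({2 * k + 1, 2 * k + 2} : Finset ℕ) = insert (2 * k + 1) {2 * k + 2} := rfl
          rw [this, e_insert_min (by intro x hx; simp at hx; omega), e_singleton]
        · have hk1 : k = d - 1 := by omega
          have h2d : 2 * k + 2 = 2 * d := by omega
          refine ⟨-1, IsSign.one.neg, ?_⟩
          rw [h2d, Nat.mod_self]
          have hpc : ({2 * k + 1, 0} : Finset ℕ) = insert 0 {2 * k + 1} := by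
            rw [Finset.pair_comm]
          rw [hpc, e_insert_min (by intro x hx; simp at hx; omega), e_singleton,
            manti hcar (by omega) (by omega) (by omega)]
          simp
      obtain ⟨εp, hsp, hp⟩ := hpair
      -- multiply
      have hYsub : YB d (B.erase k) ⊆ Finset.range (2 * d) :=
        YB_subset hd (fun x hx => hB (Finset.mem_of_mem_erase hx))
      have hpsub : ({2 * k + 1, (2 * k + 2) % (2 * d)} : Finset ℕ) ⊆ Finset.range (2 * d) := by
        intro x hx
        simp only [Finset.mem_insert, Finset.mem_singleton] at hx
        have : (2 * k + 2) % (2 * d) < 2 * d := Nat.mod_lt _ (by omega)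
        simp only [Finset.mem_range]
        omega
      obtain ⟨ε₂, hs2, h2⟩ := e_mul hcar ({2 * k + 1, (2 * k + 2) % (2 * d)}) (YB d (B.erase k))
        hpsub hYsub
      have hdisj : Disjoint (YB d (B.erase k)) ({2 * k + 1, (2 * k + 2) % (2 * d)} : Finset ℕ) := by
        rw [Finset.disjoint_left]
        intro x hx hx'
        simp only [YB, Finset.mem_biUnion, Finset.mem_insert, Finset.mem_singleton] at hx
        obtain ⟨j, hj, hxj⟩ := hx
        have hjk : j < k := hmax j hj
        have hjd : j + 1 < d := by omega
        have hmj : (2 * j + 2) % (2 * d) = 2 * j + 2 := Nat.mod_eq_of_lt (by omega)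
        rw [hmj] at hxj
        simp only [Finset.mem_insert, Finset.mem_singleton] at hx'
        rcases Nat.lt_or_ge (k + 1) d with hlt | hge
        · have : (2 * k + 2) % (2 * d) = 2 * k + 2 := Nat.mod_eq_of_lt (by omega)
          rw [this] at hx'
          omega
        · have : 2 * k + 2 = 2 * d := by omega
          rw [this, Nat.mod_self] at hx'
          omega
      have hYB : YB d (B.erase k) ∆ ({2 * k + 1, (2 * k + 2) % (2 * d)} : Finset ℕ) = YB d B := by
        rw [hdisj.symmDiff_eq_sup]
        ext x
        simp only [Finset.sup_eq_union, Finset.mem_union, YB, Finset.mem_biUnion,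
          Finset.mem_insert, Finset.mem_singleton]
        constructor
        · rintro (⟨j, hj, hx⟩ | hx)
          · exact ⟨j, Finset.mem_of_mem_erase hj, hx⟩
          · exact ⟨k, hkB, hx⟩
        · rintro ⟨j, hj, hx⟩
          by_cases hjk : j = k
          · subst hjk; exact Or.inr hx
          · exact Or.inl ⟨j, Finset.mem_erase.mpr ⟨hjk, hj⟩, hx⟩
      refine ⟨ε₁ * εp * ε₂, (hs1.mul hsp).mul hs2, ?_⟩
      rw [lb, prod_sort_peel _ hkB hmax, ← lb, h1, hp, smul_mul_assoc, mul_smul_comm, h2,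
        hYB, smul_smul, smul_smul]

end WithCar
end Main

section Value
variable {d : ℕ} {m : ℕ → Matrix (Fin (2 ^ d)) (Fin (2 ^ d)) ℂ}
  {Q : Matrix (Fin (2 ^ d)) (Fin (2 ^ d)) ℂ}

lemma value
    (hcar : ∀ i j, i < 2 * d → j < 2 * d → m i * m j + m j * m i =
      if i = j then (2 : ℂ) • (1 : Matrix (Fin (2 ^ d)) (Fin (2 ^ d)) ℂ) else 0)
    (hd : 1 ≤ d)
    (hQe : Q = Complex.I ^ d • e m (Finset.range (2 * d)))
    (htrz : ∀ s : Finset ℕ, s ⊆ Finset.range (2 * d) → s.Nonempty →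
      Matrix.trace (e m s) = 0)
    (A B : Finset ℕ) (hA : A ⊆ Finset.range d) (hB : B ⊆ Finset.range d) :
    Matrix.trace (((2 : ℂ)⁻¹ • (1 + Q)) * (la m A * lb m B)) *
      Matrix.trace (((2 : ℂ)⁻¹ • (1 + Q)) * (la m A * lb m B)) =
    if (A = ∅ ∧ B = ∅) ∨ (A = Finset.range d ∧ B = Finset.range d) then
      (2 : ℂ) ^ (d - 1) * 2 ^ (d - 1)
    else if (A = ∅ ∧ B = Finset.range d) ∨ (A = Finset.range d ∧ B = ∅) then
      (-1 : ℂ) ^ d * ((2 : ℂ) ^ (d - 1) * 2 ^ (d - 1))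
    else 0 := by
  obtain ⟨ε₁, hs1, hlb⟩ := lb_eq hcar hd B hB
  set Z := XA A ∆ YB d B with hZdef
  have hXsub : XA A ⊆ Finset.range (2 * d) := XA_subset hA
  have hYsub : YB d B ⊆ Finset.range (2 * d) := YB_subset hd hB
  have hZsub : Z ⊆ Finset.range (2 * d) := by
    intro x hx
    rw [hZdef, Finset.mem_symmDiff] at hx
    rcases hx with ⟨hx, -⟩ | ⟨hx, -⟩
    · exact hXsub hx
    · exact hYsub hx
  obtain ⟨ε₂, hs2, hmul⟩ := e_mul hcar (YB d B) (XA A) hYsub hXsub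
  have hprod : la m A * lb m B = (ε₁ * ε₂) • e m Z := by
    rw [la_eq, hlb, mul_smul_comm, hmul, smul_smul]
  have htre : Matrix.trace (e m (∅ : Finset ℕ)) = (2 : ℂ) ^ d := by
    rw [e_empty, Matrix.trace_one]
    simp
  have htrQ : Matrix.trace Q = 0 := by
    rw [hQe, Matrix.trace_smul,
      htrz _ (Finset.Subset.refl _) (by rw [Finset.nonempty_range_iff]; omega)]
    simp
  have hT : Matrix.trace (((2 : ℂ)⁻¹ • (1 + Q)) * (la m A * lb m B)) =
      (ε₁ * ε₂) * ((2 : ℂ)⁻¹ * (Matrix.trace (e m Z) + Matrix.trace (Q * e m Z))) := by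
    rw [hprod, mul_smul_comm, Matrix.trace_smul, smul_mul_assoc, Matrix.trace_smul, add_mul,
      one_mul, Matrix.trace_add]
    simp [smul_eq_mul]
  obtain ⟨ε₃, hs3, hQZ⟩ := e_mul hcar Z (Finset.range (2 * d)) hZsub (Finset.Subset.refl _)
  have hQmul : Q * e m Z = (Complex.I ^ d * ε₃) • e m (Finset.range (2 * d) \ Z) := by
    rw [hQe, smul_mul_assoc, hQZ, smul_smul,
      symmDiff_of_ge (Finset.le_iff_subset.mpr hZsub)]
  have h2d : (2 : ℂ) ^ d = 2 * 2 ^ (d - 1) := by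
    rw [← pow_succ']
    congr 1
    omega
  by_cases hc1 : (A = ∅ ∧ B = ∅) ∨ (A = Finset.range d ∧ B = Finset.range d)
  · rw [if_pos hc1]
    have hZe : Z = ∅ := by
      rw [hZdef]
      rcases hc1 with ⟨rfl, rfl⟩ | ⟨rfl, rfl⟩
      · rw [XA_empty, YB_empty, symmDiff_self, Finset.bot_eq_empty]
      · rw [XA_full, YB_full hd, symmDiff_self, Finset.bot_eq_empty]
    have hQ1 : Q * e m Z = Q := by rw [hZe, e_empty, mul_one]
    rw [hT, hQ1, hZe, htre, htrQ, add_zero]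
    have h2 : (2 : ℂ)⁻¹ * (2 : ℂ) ^ d = 2 ^ (d - 1) := by
      rw [h2d, ← mul_assoc, inv_mul_cancel₀ two_ne_zero, one_mul]
    rw [h2]
    calc (ε₁ * ε₂ * (2 : ℂ) ^ (d - 1)) * (ε₁ * ε₂ * (2 : ℂ) ^ (d - 1))
        = ((ε₁ * ε₂) * (ε₁ * ε₂)) * ((2 : ℂ) ^ (d - 1) * 2 ^ (d - 1)) := by ring
      _ = (2 : ℂ) ^ (d - 1) * 2 ^ (d - 1) := by rw [(hs1.mul hs2).sq, one_mul]
  · rw [if_neg hc1]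
    by_cases hc2 : (A = ∅ ∧ B = Finset.range d) ∨ (A = Finset.range d ∧ B = ∅)
    · rw [if_pos hc2]
      have hZf : Z = Finset.range (2 * d) := by
        rw [hZdef]
        rcases hc2 with ⟨rfl, rfl⟩ | ⟨rfl, rfl⟩
        · rw [XA_empty, YB_full hd, ← Finset.bot_eq_empty, bot_symmDiff]
        · rw [XA_full, YB_empty, ← Finset.bot_eq_empty, symmDiff_bot]
      have h0 : Matrix.trace (e m Z) = 0 := by
        rw [hZf]
        exact htrz _ (Finset.Subset.refl _) (by rw [Finset.nonempty_range_iff]; omega)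
      have hQ2 : Matrix.trace (Q * e m Z) = Complex.I ^ d * ε₃ * (2 : ℂ) ^ d := by
        rw [hQmul, Matrix.trace_smul, hZf, Finset.sdiff_self, htre, smul_eq_mul]
      rw [hT, h0, hQ2, zero_add]
      have hI : Complex.I ^ d * Complex.I ^ d = (-1 : ℂ) ^ d := by
        rw [← pow_add, show d + d = 2 * d by ring, pow_mul, Complex.I_sq]
      calc (ε₁ * ε₂ * ((2 : ℂ)⁻¹ * (Complex.I ^ d * ε₃ * (2 : ℂ) ^ d))) *
            (ε₁ * ε₂ * ((2 : ℂ)⁻¹ * (Complex.I ^ d * ε₃ * (2 : ℂ) ^ d)))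
          = ((ε₁ * ε₂) * (ε₁ * ε₂)) * ((ε₃ * ε₃) * ((Complex.I ^ d * Complex.I ^ d) *
              (((2 : ℂ)⁻¹ * 2) * ((2 : ℂ)⁻¹ * 2) * (2 ^ (d - 1) * 2 ^ (d - 1))))) := by
            rw [h2d]; ring
        _ = (-1 : ℂ) ^ d * ((2 : ℂ) ^ (d - 1) * 2 ^ (d - 1)) := by
            rw [(hs1.mul hs2).sq, hs3.sq, hI, inv_mul_cancel₀ (two_ne_zero)]
            ring
    · rw [if_neg hc2]
      have hZne : Z ≠ ∅ := by
        intro h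
        have hXY : XA A = YB d B := by
          apply symmDiff_eq_bot.mp
          rw [← hZdef, h, Finset.bot_eq_empty]
        rcases classify_eq hd hA hB hXY with ⟨h1, h2⟩ | ⟨h1, h2⟩
        · exact hc1 (Or.inl ⟨h1, h2⟩)
        · exact hc1 (Or.inr ⟨h1, h2⟩)
      have hZnr : Z ≠ Finset.range (2 * d) := by
        intro h
        have hx : ∀ x, x < 2 * d → (x ∈ XA A ↔ x ∉ YB d B) := by
          intro x hxd
          have hxZ : x ∈ XA A ∆ YB d B := by
            rw [← hZdef, h]
            exact Finset.mem_range.mpr hxd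
          rw [Finset.mem_symmDiff] at hxZ
          constructor
          · intro h1 h2
            rcases hxZ with ⟨-, h3⟩ | ⟨-, h3⟩
            · exact h3 h2
            · exact h3 h1
          · intro h2
            rcases hxZ with ⟨h3, -⟩ | ⟨h3, -⟩
            · exact h3
            · exact absurd h3 h2
        rcases classify_compl hd hA hB hx with ⟨h1, h2⟩ | ⟨h1, h2⟩
        · exact hc2 (Or.inl ⟨h1, h2⟩)
        · exact hc2 (Or.inr ⟨h1, h2⟩)
      have hTe : Matrix.trace (e m Z) = 0 :=
        htrz Z hZsub (Finset.nonempty_iff_ne_empty.mpr hZne)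
      have hsd : (Finset.range (2 * d) \ Z).Nonempty := by
        obtain ⟨x, hx1, hx2⟩ :=
          Finset.exists_of_ssubset (ssubset_of_subset_of_ne hZsub hZnr)
        exact ⟨x, Finset.mem_sdiff.mpr ⟨hx1, hx2⟩⟩
      have hTq : Matrix.trace (Q * e m Z) = 0 := by
        rw [hQmul, Matrix.trace_smul, htrz _ Finset.sdiff_subset hsd]
        simp
      rw [hT, hTe, hTq]
      simp

end Value

end Stmt19Aux

/-- For Majorana operators `m_0,…,m_{2d-1}` on the `2^d`-dimensional Fock space of `d`
modes, with parity operator `Q = i^d m_0 ⋯ m_{2d-1}` and all nonempty products of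
distinct Majoranas traceless, the positive-parity component of `L'_FLO` satisfies
`tr((P⁺⊗P⁺) L'_FLO) = (1 + (-1)^d)/2`; in particular it is nonzero iff `d` is even. -/
theorem stmt_19 (d : ℕ) (hd : 1 ≤ d)
    (m : ℕ → Matrix (Fin (2 ^ d)) (Fin (2 ^ d)) ℂ)
    (hherm : ∀ i, i < 2 * d → (m i)ᴴ = m i)
    (hcar : ∀ i j, i < 2 * d → j < 2 * d → m i * m j + m j * m i =
      if i = j then (2 : ℂ) • (1 : Matrix (Fin (2 ^ d)) (Fin (2 ^ d)) ℂ) else 0)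
    (Q : Matrix (Fin (2 ^ d)) (Fin (2 ^ d)) ℂ)
    (hQ : Q = Complex.I ^ d • (List.ofFn fun i : Fin (2 * d) => m (i : ℕ)).prod)
    (htr : ∀ s : Finset (Fin (2 * d)), s.Nonempty →
      Matrix.trace ((s.sort (· ≤ ·)).map fun i => m (i : ℕ)).prod = 0) :
    Matrix.trace
        ((((2 : ℂ)⁻¹ • ((1 : Matrix (Fin (2 ^ d)) (Fin (2 ^ d)) ℂ) + Q)) ⊗ₖ
            ((2 : ℂ)⁻¹ • ((1 : Matrix (Fin (2 ^ d)) (Fin (2 ^ d)) ℂ) + Q))) *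
          LFLO d m) =
      (1 + (-1 : ℂ) ^ d) / 2 := by
  classical
  have hQe : Q = Complex.I ^ d • Stmt19Aux.e m (Finset.range (2 * d)) := by
    rw [hQ]
    congr 1
    rw [Stmt19Aux.e, Finset.sort_range, List.ofFn_eq_map, ← List.map_coe_finRange_eq_range, List.map_map]
    rfl
  have htrz : ∀ s : Finset ℕ, s ⊆ Finset.range (2 * d) → s.Nonempty →
      Matrix.trace (Stmt19Aux.e m s) = 0 := fun s hs hne => Stmt19Aux.trace_e_zero htr hs hne
  have hU : (List.ofFn fun i : Fin d => (1 : Matrix (Fin (2 ^ d) × Fin (2 ^ d))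
        (Fin (2 ^ d) × Fin (2 ^ d)) ℂ) + Qkl m (2 * (i : ℕ)) (2 * (i : ℕ) + 1)).prod
      = ∑ A ∈ (Finset.range d).powerset, (Stmt19Aux.la m A) ⊗ₖ (Stmt19Aux.la m A) := by
    rw [List.ofFn_eq_map]
    have h1 : ((List.finRange d).map fun (i : Fin d) => (1 : Matrix (Fin (2 ^ d) × Fin (2 ^ d))
          (Fin (2 ^ d) × Fin (2 ^ d)) ℂ) + Qkl m (2 * (i : ℕ)) (2 * (i : ℕ) + 1))
        = (List.range d).map (fun i => 1 + Qkl m (2 * i) (2 * i + 1)) := by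
      rw [← List.map_coe_finRange_eq_range, List.map_map]
      rfl
    rw [h1, Stmt19Aux.prod_one_add]
    refine Finset.sum_congr rfl fun A hA => ?_
    have h2 : (A.sort (· ≤ ·)).map (fun i => Qkl m (2 * i) (2 * i + 1))
        = ((A.sort (· ≤ ·)).map fun i => m (2 * i) * m (2 * i + 1)).map
            (fun x => x ⊗ₖ x) := by
      rw [List.map_map]
      rfl
    rw [h2, Stmt19Aux.prod_kron]
    rfl
  have hV : (List.ofFn fun j : Fin d => (1 : Matrix (Fin (2 ^ d) × Fin (2 ^ d))
        (Fin (2 ^ d) × Fin (2 ^ d)) ℂ) +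
          Qkl m (2 * (j : ℕ) + 1) ((2 * (j : ℕ) + 2) % (2 * d))).prod
      = ∑ B ∈ (Finset.range d).powerset, (Stmt19Aux.lb m B) ⊗ₖ (Stmt19Aux.lb m B) := by
    rw [List.ofFn_eq_map]
    have h1 : ((List.finRange d).map fun (j : Fin d) => (1 : Matrix (Fin (2 ^ d) × Fin (2 ^ d))
          (Fin (2 ^ d) × Fin (2 ^ d)) ℂ) +
            Qkl m (2 * (j : ℕ) + 1) ((2 * (j : ℕ) + 2) % (2 * d)))
        = (List.range d).map (fun j => 1 + Qkl m (2 * j + 1) ((2 * j + 2) % (2 * d))) := by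
      rw [← List.map_coe_finRange_eq_range, List.map_map]
      rfl
    rw [h1, Stmt19Aux.prod_one_add]
    refine Finset.sum_congr rfl fun B hB => ?_
    have h2 : (B.sort (· ≤ ·)).map (fun j => Qkl m (2 * j + 1) ((2 * j + 2) % (2 * d)))
        = ((B.sort (· ≤ ·)).map fun j => m (2 * j + 1) * m ((2 * j + 2) % (2 * d))).map
            (fun x => x ⊗ₖ x) := by
      rw [List.map_map]
      rfl
    rw [h2, Stmt19Aux.prod_kron]
    rfl
  rw [LFLO, hU, hV, Matrix.mul_smul, Matrix.trace_smul, smul_eq_mul, Finset.sum_mul_sum,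
    Finset.mul_sum, Matrix.trace_sum]
  have hterm : ∀ A ∈ (Finset.range d).powerset,
      Matrix.trace ((((2 : ℂ)⁻¹ • ((1 : Matrix (Fin (2 ^ d)) (Fin (2 ^ d)) ℂ) + Q)) ⊗ₖ
          ((2 : ℂ)⁻¹ • ((1 : Matrix (Fin (2 ^ d)) (Fin (2 ^ d)) ℂ) + Q))) *
        ∑ B ∈ (Finset.range d).powerset,
          (Stmt19Aux.la m A ⊗ₖ Stmt19Aux.la m A) * (Stmt19Aux.lb m B ⊗ₖ Stmt19Aux.lb m B))
      = ∑ B ∈ (Finset.range d).powerset,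
          (if (A = ∅ ∧ B = ∅) ∨ (A = Finset.range d ∧ B = Finset.range d) then
            (2 : ℂ) ^ (d - 1) * 2 ^ (d - 1)
          else if (A = ∅ ∧ B = Finset.range d) ∨ (A = Finset.range d ∧ B = ∅) then
            (-1 : ℂ) ^ d * ((2 : ℂ) ^ (d - 1) * 2 ^ (d - 1))
          else 0) := by
    intro A hA
    rw [Finset.mul_sum, Matrix.trace_sum]
    refine Finset.sum_congr rfl fun B hB => ?_
    rw [← Matrix.mul_kronecker_mul, ← Matrix.mul_kronecker_mul, Matrix.trace_kronecker]
    exact Stmt19Aux.value hcar hd hQe htrz A B (Finset.mem_powerset.mp hA)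
      (Finset.mem_powerset.mp hB)
  rw [Finset.sum_congr rfl hterm]
  -- evaluate the double sum
  have hRne : (Finset.range d) ≠ (∅ : Finset ℕ) :=
    (Finset.nonempty_range_iff.mpr (by omega)).ne_empty
  set c1 : ℂ := (2 : ℂ) ^ (d - 1) * 2 ^ (d - 1) with hc1
  set c2 : ℂ := (-1 : ℂ) ^ d * ((2 : ℂ) ^ (d - 1) * 2 ^ (d - 1)) with hc2
  have hinner : ∀ A : Finset ℕ,
      (∑ B ∈ (Finset.range d).powerset,
        (if (A = ∅ ∧ B = ∅) ∨ (A = Finset.range d ∧ B = Finset.range d) then c1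
        else if (A = ∅ ∧ B = Finset.range d) ∨ (A = Finset.range d ∧ B = ∅) then c2
        else 0))
      = (if A = ∅ then c1 + c2 else if A = Finset.range d then c2 + c1 else 0) := by
    intro A
    have hpt : ∀ B : Finset ℕ,
        (if (A = ∅ ∧ B = ∅) ∨ (A = Finset.range d ∧ B = Finset.range d) then c1
        else if (A = ∅ ∧ B = Finset.range d) ∨ (A = Finset.range d ∧ B = ∅) then c2
        else 0)
        = (if B = ∅ then (if A = ∅ then c1 else if A = Finset.range d then c2 else 0) else 0)
          + (if B = Finset.range d then
              (if A = ∅ then c2 else if A = Finset.range d then c1 else 0) else 0) := by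
      intro B
      by_cases h1 : B = ∅ <;> by_cases h2 : B = Finset.range d <;>
        by_cases h3 : A = ∅ <;> by_cases h4 : A = Finset.range d <;>
        simp [h1, h2, h3, h4, hRne, Ne.symm hRne]
    rw [Finset.sum_congr rfl fun B _ => hpt B, Finset.sum_add_distrib,
      Finset.sum_ite_eq' (Finset.range d).powerset (∅ : Finset ℕ),
      Finset.sum_ite_eq' (Finset.range d).powerset (Finset.range d),
      if_pos (Finset.empty_mem_powerset _), if_pos (Finset.mem_powerset_self _)]
    by_cases h3 : A = ∅ <;> by_cases h4 : A = Finset.range d <;>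
      simp [h3, h4, hRne, Ne.symm hRne]
  rw [Finset.sum_congr rfl fun A _ => hinner A]
  have houter : (∑ A ∈ (Finset.range d).powerset,
      (if A = ∅ then c1 + c2 else if A = Finset.range d then c2 + c1 else 0))
      = (c1 + c2) + (c2 + c1) := by
    have hpt : ∀ A : Finset ℕ,
        (if A = ∅ then c1 + c2 else if A = Finset.range d then c2 + c1 else 0)
        = (if A = ∅ then c1 + c2 else 0) + (if A = Finset.range d then c2 + c1 else 0) := by
      intro A
      by_cases h3 : A = ∅ <;> by_cases h4 : A = Finset.range d <;>
      simp [h3, h4, hRne, Ne.symm hRne]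
    rw [Finset.sum_congr rfl fun A _ => hpt A, Finset.sum_add_distrib,
      Finset.sum_ite_eq' (Finset.range d).powerset (∅ : Finset ℕ),
      Finset.sum_ite_eq' (Finset.range d).powerset (Finset.range d),
      if_pos (Finset.empty_mem_powerset _), if_pos (Finset.mem_powerset_self _)]
  rw [houter, hc1, hc2]
  have hpow : (2 : ℂ) ^ (2 * d) = 2 ^ (d - 1) * 2 ^ (d - 1) * 4 := by
    rw [show 2 * d = (d - 1) + ((d - 1) + 2) by omega, pow_add, pow_add]
    norm_num
    ring
  have hne2 : (2 : ℂ) ^ (d - 1) ≠ 0 := pow_ne_zero _ two_ne_zero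
  rw [hpow]
  field_simp
  ring
end
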